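/- arXiv:math/0701073 — 4 statements merged into one kernel-verified Lean document; each statement's English description precedes it below -/
import Mathlib

section
/- Let I = a + Σ_{i=1}^n a_i∂^{-1}b_i ∈ F⟨∂^{-1}⟩ with n = L(I). Then Pol(I) = Ca_1 + ⋯ + Ca_n, the C-linear span of a_1, …, a_n. -/
open Finset

/-- A derivation on a field `F`. -/
structure IsDerivation {F : Type*} [Field F] (d : F → F) : Prop where
  map_add : ∀ a b : F, d (a + b) = d a + d b
  leibniz : ∀ a b : F, d (a * b) = d a * b + a * d b

namespace IsDerivation

variable {F : Type*} [Field F] {d : F → F}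

theorem map_zero' (hd : IsDerivation d) : d 0 = 0 := by
  have h := hd.map_add 0 0
  simp only [add_zero] at h
  exact (left_eq_add.mp h)

theorem map_one' (hd : IsDerivation d) : d 1 = 0 := by
  have h := hd.leibniz 1 1
  simp only [mul_one, one_mul] at h
  exact (left_eq_add.mp h)

theorem map_neg' (hd : IsDerivation d) (a : F) : d (-a) = - d a := by
  have h := hd.map_add a (-a)
  simp only [add_neg_cancel, hd.map_zero'] at h
  exact (neg_eq_of_add_eq_zero_right h.symm).symm

end IsDerivation

/-- The subfield of constants of a derivation. -/
def constants (F : Type*) [Field F] (d : F → F) (hd : IsDerivation d) : Subfield F where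
  carrier := {a : F | d a = 0}
  zero_mem' := hd.map_zero'
  one_mem' := hd.map_one'
  add_mem' := by
    intro a b ha hb
    simp only [Set.mem_setOf_eq] at *
    rw [hd.map_add, ha, hb, add_zero]
  neg_mem' := by
    intro a ha
    simp only [Set.mem_setOf_eq] at *
    rw [hd.map_neg', ha, neg_zero]
  mul_mem' := by
    intro a b ha hb
    simp only [Set.mem_setOf_eq] at *
    rw [hd.leibniz, ha, hb, zero_mul, mul_zero, add_zero]
  inv_mem' := by
    intro a ha
    simp only [Set.mem_setOf_eq] at *
    by_cases h0 : a = 0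
    · rw [h0, inv_zero]; exact hd.map_zero'
    · have h := hd.leibniz a a⁻¹
      rw [mul_inv_cancel₀ h0, hd.map_one', ha, zero_mul, zero_add] at h
      have h2 : a * d a⁻¹ = 0 := h.symm
      rcases mul_eq_zero.mp h2 with h3 | h3
      · exact absurd h3 h0
      · exact h3
/-- `A` is the ring of differential operators `F⟨∂⟩` over the differential field `(F, d)`:
it contains `F` via `ι`, an element `δ` (the symbol `∂`) satisfying `∂a = a∂ + a'`, and every
element has a unique expression `Σ ι(aᵢ) ∂^i`. -/
structure IsDiffOpRing {F : Type*} [Field F] (d : F → F) (A : Type*) [Ring A]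
    (ι : F →+* A) (δ : A) : Prop where
  comm : ∀ a : F, δ * ι a = ι a * δ + ι (d a)
  repr : ∀ P : A, ∃! c : ℕ →₀ F, P = c.sum fun i x => ι x * δ ^ i

/-- The action of the differential operator with coefficients `a 0, …, a n`
(i.e. `Σ_{i ≤ n} aᵢ ∂^i`) on an element `y` of `F`. -/
def diffOpAct {F : Type*} [Field F] (d : F → F) (n : ℕ) (a : ℕ → F) (y : F) : F :=
  ∑ i ∈ Finset.range (n + 1), a i * d^[i] y

/-- A differential field is linearly differentially closed if every differential operator of
positive degree has a nonzero zero. -/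
def LinDiffClosed {F : Type*} [Field F] (d : F → F) : Prop :=
  ∀ (n : ℕ) (a : ℕ → F), 0 < n → a n ≠ 0 → ∃ y : F, y ≠ 0 ∧ diffOpAct d n a y = 0

/-- `P ∈ F⟨∂⟩` has degree `n`, i.e. `P = Σ_{i ≤ n} ι(aᵢ) δ^i` with `aₙ ≠ 0`. -/
def HasDeg {F : Type*} [Field F] {A : Type*} [Ring A] (ι : F →+* A) (δ : A)
    (P : A) (n : ℕ) : Prop :=
  ∃ a : ℕ → F, a n ≠ 0 ∧ P = ∑ i ∈ Finset.range (n + 1), ι (a i) * δ ^ i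

/-- `K` is the division ring of quotients of the (Ore) domain `A`: `A` embeds in `K` via `j`
and every element of `K` has the form `P⁻¹ Q` with `P, Q ∈ A`, `P ≠ 0`. -/
structure IsQuotientDivisionRing (A : Type*) [Ring A] (K : Type*) [DivisionRing K]
    (j : A →+* K) : Prop where
  inj : Function.Injective j
  quot : ∀ f : K, ∃ P Q : A, P ≠ 0 ∧ f = (j P)⁻¹ * j Q

/-- `f = P⁻¹ Q` is a minimal presentation of `f ∈ F(∂)`: a presentation where `P` has the
smallest possible degree. -/
def IsMinPres {F : Type*} [Field F] {A : Type*} [Ring A] (ι : F →+* A) (δ : A)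
    {K : Type*} [DivisionRing K] (j : A →+* K) (f : K) (P Q : A) : Prop :=
  P ≠ 0 ∧ f = (j P)⁻¹ * j Q ∧
    ∀ (P' Q' : A) (n n' : ℕ), P' ≠ 0 → f = (j P')⁻¹ * j Q' →
      HasDeg ι δ P n → HasDeg ι δ P' n' → n ≤ n'

/-- `f ∈ F(∂)` has length `n`: the smallest degree of `P` over all presentations
`f = P⁻¹ Q` is `n`. -/
def HasLength {F : Type*} [Field F] {A : Type*} [Ring A] (ι : F →+* A) (δ : A)
    {K : Type*} [DivisionRing K] (j : A →+* K) (f : K) (n : ℕ) : Prop :=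
  (∃ P Q : A, P ≠ 0 ∧ f = (j P)⁻¹ * j Q ∧ HasDeg ι δ P n) ∧
  ∀ (P Q : A) (m : ℕ), P ≠ 0 → f = (j P)⁻¹ * j Q → HasDeg ι δ P m → n ≤ m

namespace PolesAux
open Finset

variable {F : Type*} [Field F] {d : F → F} {A : Type*} [Ring A]

theorem iter_add (hd : IsDerivation d) (k : ℕ) (x y : F) :
    d^[k] (x + y) = d^[k] x + d^[k] y := by
  induction k generalizing x y with
  | zero => simp
  | succ k ih =>
      rw [Function.iterate_succ_apply, Function.iterate_succ_apply,
        Function.iterate_succ_apply, hd.map_add, ih]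

theorem iter_const_mul (hd : IsDerivation d) {γ : F} (hγ : d γ = 0) (k : ℕ) (x : F) :
    d^[k] (γ * x) = γ * d^[k] x := by
  induction k generalizing x with
  | zero => simp
  | succ k ih =>
      rw [Function.iterate_succ_apply, Function.iterate_succ_apply, hd.leibniz, hγ,
        zero_mul, zero_add, ih]

/-- `P = Σ_{i ≤ m} ι(bᵢ) δ^i`. -/
def Rep (ι : F →+* A) (δ : A) (P : A) (m : ℕ) (b : ℕ → F) : Prop :=
  P = ∑ i ∈ range (m + 1), ι (b i) * δ ^ i

theorem rep_iff {ι : F →+* A} {δ : A} {P : A} {m : ℕ} {b : ℕ → F} :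
    Rep ι δ P m b ↔ P = ∑ i ∈ range (m + 1), ι (b i) * δ ^ i := Iff.rfl

theorem Rep.pad {ι : F →+* A} {δ : A} {P : A} {m m' : ℕ} {b : ℕ → F}
    (h : Rep ι δ P m b) (hmm : m ≤ m') :
    Rep ι δ P m' (fun i => if i ≤ m then b i else 0) := by
  rw [Rep] at h ⊢
  rw [h]
  calc ∑ i ∈ range (m+1), ι (b i) * δ ^ i
      = ∑ i ∈ range (m+1), ι (if i ≤ m then b i else 0) * δ ^ i :=
        Finset.sum_congr rfl fun i hi => by
          rw [if_pos (by simp only [mem_range] at hi; omega)]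
    _ = ∑ i ∈ range (m'+1), ι (if i ≤ m then b i else 0) * δ ^ i :=
        Finset.sum_subset (Finset.range_subset_range.2 (by omega))
          (fun i _ hi => by
            simp only [mem_range, not_lt] at hi
            rw [if_neg (by omega), map_zero, zero_mul])

theorem rep_exists (hA : IsDiffOpRing d A ι δ) (P : A) : ∃ m b, Rep ι δ P m b := by
  obtain ⟨c, hc, -⟩ := hA.repr P
  refine ⟨c.support.sup id, c, ?_⟩
  rw [Rep, hc, Finsupp.sum]
  refine Finset.sum_subset (fun i hi => ?_) (fun i _ hi => ?_)
  · exact mem_range.2 (Nat.lt_succ_of_le (Finset.le_sup (f := id) hi))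
  · rw [Finsupp.notMem_support_iff.1 hi, map_zero, zero_mul]

theorem rep_unique (hA : IsDiffOpRing d A ι δ) {P : A} {m m' : ℕ} {b b' : ℕ → F}
    (h : Rep ι δ P m b) (h' : Rep ι δ P m' b') :
    (fun i => if i ≤ m then b i else 0) = (fun i => if i ≤ m' then b' i else 0) := by
  have key : ∀ (mm : ℕ) (bb : ℕ → F), Rep ι δ P mm bb →
      P = (Finsupp.onFinset (range (mm+1)) (fun i => if i ≤ mm then bb i else 0)
        (fun i hi => mem_range.2 (by by_contra hc; exact hi (if_neg (by omega)))) :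
        ℕ →₀ F).sum fun i x => ι x * δ ^ i := by
    intro mm bb hbb
    rw [Finsupp.sum]
    have hsub : (Finsupp.onFinset (range (mm+1)) (fun i => if i ≤ mm then bb i else 0)
        (fun i hi => mem_range.2 (by by_contra hc; exact hi (if_neg (by omega)))) :
        ℕ →₀ F).support ⊆ range (mm+1) := Finsupp.support_onFinset_subset
    rw [Finset.sum_subset hsub (fun i _ hi => by
      rw [Finsupp.notMem_support_iff.1 hi, map_zero, zero_mul])]
    rw [Rep] at hbb
    rw [hbb]
    exact Finset.sum_congr rfl fun i hi => by
      simp only [Finsupp.onFinset_apply]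
      rw [if_pos (by simp only [mem_range] at hi; omega)]
  have e := (hA.repr P).unique (key m b h) (key m' b' h')
  have := congrArg (fun (c : ℕ →₀ F) => (c : ℕ → F)) e
  simpa using this

theorem rep_zero (hA : IsDiffOpRing d A ι δ) {m : ℕ} {b : ℕ → F}
    (h : Rep ι δ (0 : A) m b) : ∀ i ≤ m, b i = 0 := by
  have h0 : Rep ι δ (0 : A) m (fun _ => 0) := by
    rw [Rep]
    simp
  have e := rep_unique hA h h0
  intro i hi
  have := congrFun e i
  simpa [if_pos hi] using this

theorem hasDeg_rep {ι : F →+* A} {δ : A} {P : A} {m : ℕ} (h : HasDeg ι δ P m) :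
    ∃ b, b m ≠ 0 ∧ Rep ι δ P m b := h

theorem hasDeg_ne_zero (hA : IsDiffOpRing d A ι δ) {P : A} {m : ℕ}
    (h : HasDeg ι δ P m) : P ≠ 0 := by
  rintro rfl
  obtain ⟨b, hb, hrep⟩ := h
  exact hb (rep_zero hA hrep m le_rfl)

theorem exists_hasDeg (hA : IsDiffOpRing d A ι δ) {P : A} (hP : P ≠ 0) :
    ∃ m, HasDeg ι δ P m := by
  obtain ⟨m, b, hrep⟩ := rep_exists hA P
  induction m generalizing b with
  | zero =>
      refine ⟨0, b, fun hb0 => hP ?_, hrep⟩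
      rw [Rep] at hrep
      simpa [hb0] using hrep
  | succ m ih =>
      by_cases hb : b (m+1) = 0
      · refine ih (b := b) ?_
        rw [Rep, Finset.sum_range_succ, hb, map_zero, zero_mul, add_zero] at hrep
        exact hrep
      · exact ⟨m+1, b, hb, hrep⟩

theorem deg_unique (hA : IsDiffOpRing d A ι δ) {P : A} {m m' : ℕ}
    (h : HasDeg ι δ P m) (h' : HasDeg ι δ P m') : m = m' := by
  obtain ⟨b, hb, hrep⟩ := h
  obtain ⟨b', hb', hrep'⟩ := h'
  have e := rep_unique hA hrep hrep'
  have e1 := congrFun e m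
  have e2 := congrFun e m'
  simp only [le_refl, if_pos] at e1 e2
  by_contra hne
  rcases Nat.lt_or_ge m m' with hlt | hge
  · rw [if_neg (by omega)] at e2
    exact hb' e2.symm
  · rw [if_neg (by omega)] at e1
    exact hb e1

end PolesAux
namespace PolesAux2
open Finset PolesAux

variable {F : Type*} [Field F] {d : F → F} {A : Type*} [Ring A]
variable {ι : F →+* A} {δ : A} {act : A → F → F}

theorem act_rep (hact : ∀ (m : ℕ) (b : ℕ → F),
      act (∑ i ∈ Finset.range (m + 1), ι (b i) * δ ^ i) = diffOpAct d m b)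
    {P : A} {m : ℕ} {b : ℕ → F} (h : Rep ι δ P m b) (y : F) :
    act P y = ∑ i ∈ range (m + 1), b i * d^[i] y := by
  rw [rep_iff] at h
  rw [h, hact m b]
  rfl

theorem rep_monomial (c : F) (k : ℕ) :
    Rep ι δ (ι c * δ ^ k) k (fun i => if i = k then c else 0) := by
  rw [rep_iff, Finset.sum_eq_single k (fun i _ hik => by rw [if_neg hik, map_zero, zero_mul])
    (fun hk => absurd (self_mem_range_succ k) hk), if_pos rfl]

theorem act_monomial (hact : ∀ (m : ℕ) (b : ℕ → F),
      act (∑ i ∈ Finset.range (m + 1), ι (b i) * δ ^ i) = diffOpAct d m b)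
    (c : F) (k : ℕ) (y : F) :
    act (ι c * δ ^ k) y = c * d^[k] y := by
  rw [act_rep hact (rep_monomial c k) y,
    Finset.sum_eq_single k (fun i _ hik => by rw [if_neg hik, zero_mul])
    (fun hk => absurd (self_mem_range_succ k) hk), if_pos rfl]

theorem rep_add {P P' : A} {m : ℕ} {b b' : ℕ → F}
    (h : Rep ι δ P m b) (h' : Rep ι δ P' m b') :
    Rep ι δ (P + P') m (fun i => b i + b' i) := by
  rw [rep_iff] at h h' ⊢
  rw [h, h', ← Finset.sum_add_distrib]
  exact Finset.sum_congr rfl fun i _ => by rw [map_add, add_mul]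

theorem rep_zero' : Rep ι δ (0 : A) 0 (fun _ => 0) := by
  rw [rep_iff]; simp

theorem act_zero (hact : ∀ (m : ℕ) (b : ℕ → F),
      act (∑ i ∈ Finset.range (m + 1), ι (b i) * δ ^ i) = diffOpAct d m b)
    (y : F) : act (0 : A) y = 0 := by
  rw [act_rep hact rep_zero' y]; simp

theorem act_add_left (hA : IsDiffOpRing d A ι δ)
    (hact : ∀ (m : ℕ) (b : ℕ → F),
      act (∑ i ∈ Finset.range (m + 1), ι (b i) * δ ^ i) = diffOpAct d m b)
    (P P' : A) (y : F) : act (P + P') y = act P y + act P' y := by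
  obtain ⟨m, b, h⟩ := rep_exists hA P
  obtain ⟨m', b', h'⟩ := rep_exists hA P'
  have h1 := h.pad (le_max_left m m')
  have h2 := h'.pad (le_max_right m m')
  rw [act_rep hact (rep_add h1 h2) y, act_rep hact h1 y, act_rep hact h2 y,
    ← Finset.sum_add_distrib]
  exact Finset.sum_congr rfl fun i _ => by rw [add_mul]

theorem act_sum (hA : IsDiffOpRing d A ι δ)
    (hact : ∀ (m : ℕ) (b : ℕ → F),
      act (∑ i ∈ Finset.range (m + 1), ι (b i) * δ ^ i) = diffOpAct d m b)
    {β : Type*} (s : Finset β) (g : β → A) (y : F) :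
    act (∑ i ∈ s, g i) y = ∑ i ∈ s, act (g i) y := by
  classical
  induction s using Finset.induction_on with
  | empty => simpa using act_zero hact y
  | insert _ _ hnotmem ih =>
      rw [Finset.sum_insert hnotmem, Finset.sum_insert hnotmem,
        act_add_left hA hact, ih]

theorem act_add_arg (hA : IsDiffOpRing d A ι δ) (hd : IsDerivation d)
    (hact : ∀ (m : ℕ) (b : ℕ → F),
      act (∑ i ∈ Finset.range (m + 1), ι (b i) * δ ^ i) = diffOpAct d m b)
    (P : A) (x y : F) : act P (x + y) = act P x + act P y := by
  obtain ⟨m, b, h⟩ := rep_exists hA P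
  rw [act_rep hact h, act_rep hact h, act_rep hact h, ← Finset.sum_add_distrib]
  exact Finset.sum_congr rfl fun i _ => by rw [iter_add hd, mul_add]

theorem act_const_mul_arg (hA : IsDiffOpRing d A ι δ) (hd : IsDerivation d)
    (hact : ∀ (m : ℕ) (b : ℕ → F),
      act (∑ i ∈ Finset.range (m + 1), ι (b i) * δ ^ i) = diffOpAct d m b)
    (P : A) {γ : F} (hγ : d γ = 0) (x : F) : act P (γ * x) = γ * act P x := by
  obtain ⟨m, b, h⟩ := rep_exists hA P
  rw [act_rep hact h, act_rep hact h, Finset.mul_sum]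
  exact Finset.sum_congr rfl fun i _ => by
    rw [iter_const_mul hd hγ]; ring

theorem act_mul_delta (hA : IsDiffOpRing d A ι δ)
    (hact : ∀ (m : ℕ) (b : ℕ → F),
      act (∑ i ∈ Finset.range (m + 1), ι (b i) * δ ^ i) = diffOpAct d m b)
    (P : A) (y : F) : act (P * δ) y = act P (d y) := by
  obtain ⟨m, b, h⟩ := rep_exists hA P
  have hrep' : Rep ι δ (P * δ) (m + 1) (fun i => if i = 0 then 0 else b (i - 1)) := by
    rw [rep_iff] at h ⊢
    rw [h, Finset.sum_mul,
      Finset.sum_range_succ' (fun i => ι (if i = 0 then (0 : F) else b (i - 1)) * δ ^ i) (m + 1),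
      if_pos rfl, map_zero, zero_mul, add_zero]
    exact Finset.sum_congr rfl fun i _ => by
      rw [if_neg (Nat.succ_ne_zero i), Nat.add_sub_cancel, pow_succ, mul_assoc]
  rw [act_rep hact hrep', act_rep hact h,
    Finset.sum_range_succ' (fun i => (if i = 0 then (0 : F) else b (i - 1)) * d^[i] y) (m + 1),
    if_pos rfl, zero_mul, add_zero]
  exact Finset.sum_congr rfl fun i _ => by
    rw [if_neg (Nat.succ_ne_zero i), Nat.add_sub_cancel, Function.iterate_succ_apply]

theorem act_monomial_mul_iota (hA : IsDiffOpRing d A ι δ) (hd : IsDerivation d)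
    (hact : ∀ (m : ℕ) (b : ℕ → F),
      act (∑ i ∈ Finset.range (m + 1), ι (b i) * δ ^ i) = diffOpAct d m b)
    (c : F) (k : ℕ) (u y : F) :
    act (ι c * δ ^ k * ι u) y = c * d^[k] (u * y) := by
  induction k generalizing u y with
  | zero =>
      rw [pow_zero, mul_one, ← map_mul]
      have := act_monomial hact (c * u) 0 y
      rw [pow_zero, mul_one] at this
      rw [this]
      simp [mul_assoc]
  | succ k ih =>
      have key : ι c * δ ^ (k+1) * ι u
          = (ι c * δ ^ k * ι u) * δ + ι c * δ ^ k * ι (d u) := by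
        rw [pow_succ,
          show ι c * (δ ^ k * δ) * ι u = ι c * δ ^ k * (δ * ι u) from by noncomm_ring,
          hA.comm u]
        noncomm_ring
      rw [key, act_add_left hA hact, act_mul_delta hA hact, ih, ih, ← mul_add, ← iter_add hd,
        show u * d y + d u * y = d (u * y) from by rw [hd.leibniz]; ring,
        ← Function.iterate_succ_apply]

theorem act_mul_iota (hA : IsDiffOpRing d A ι δ) (hd : IsDerivation d)
    (hact : ∀ (m : ℕ) (b : ℕ → F),
      act (∑ i ∈ Finset.range (m + 1), ι (b i) * δ ^ i) = diffOpAct d m b)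
    (P : A) (u y : F) : act (P * ι u) y = act P (u * y) := by
  obtain ⟨m, b, h⟩ := rep_exists hA P
  have h' := h
  rw [rep_iff] at h'
  rw [act_rep hact h, h', Finset.sum_mul, act_sum hA hact]
  exact Finset.sum_congr rfl fun i _ => act_monomial_mul_iota hA hd hact _ _ _ _

theorem deltapow_iota (hA : IsDiffOpRing d A ι δ) (k : ℕ) (u : F) :
    ∃ S : A, δ ^ k * ι u = S * δ + ι (d^[k] u) := by
  induction k with
  | zero => exact ⟨0, by simp⟩
  | succ k ih =>
      obtain ⟨S, hS⟩ := ih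
      refine ⟨δ * S + ι (d^[k] u), ?_⟩
      rw [pow_succ', mul_assoc, hS, mul_add, ← mul_assoc, hA.comm (d^[k] u),
        Function.iterate_succ_apply', add_mul]
      noncomm_ring

theorem mul_iota_split (hA : IsDiffOpRing d A ι δ)
    (hact : ∀ (m : ℕ) (b : ℕ → F),
      act (∑ i ∈ Finset.range (m + 1), ι (b i) * δ ^ i) = diffOpAct d m b)
    (P : A) (u : F) : ∃ S : A, P * ι u = S * δ + ι (act P u) := by
  obtain ⟨m, b, h⟩ := rep_exists hA P
  choose S hS using fun i => deltapow_iota hA i u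
  refine ⟨∑ i ∈ range (m + 1), ι (b i) * S i, ?_⟩
  have hsum : act P u = ∑ i ∈ range (m + 1), b i * d^[i] u := act_rep hact h u
  rw [rep_iff] at h
  rw [hsum, h, Finset.sum_mul, Finset.sum_mul, map_sum, ← Finset.sum_add_distrib]
  exact Finset.sum_congr rfl fun i _ => by
    rw [mul_assoc, hS i, mul_add, ← mul_assoc, ← map_mul]

end PolesAux2
namespace PolesAux3
open Finset PolesAux PolesAux2

variable {F : Type*} [Field F] {d : F → F} {A : Type*} [Ring A]
variable {ι : F →+* A} {δ : A}

/-- `P` has degree at most `m`. -/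
def DegLE (ι : F →+* A) (δ : A) (P : A) (m : ℕ) : Prop := ∃ b, Rep ι δ P m b

theorem degle_mono {P : A} {m m' : ℕ} (h : DegLE ι δ P m) (hmm : m ≤ m') :
    DegLE ι δ P m' := by
  obtain ⟨b, hb⟩ := h
  exact ⟨_, hb.pad hmm⟩

theorem degle_add {P Q : A} {m : ℕ} (h : DegLE ι δ P m) (h' : DegLE ι δ Q m) :
    DegLE ι δ (P + Q) m := by
  obtain ⟨b, hb⟩ := h
  obtain ⟨b', hb'⟩ := h'
  exact ⟨_, rep_add hb hb'⟩

theorem degle_zero (m : ℕ) : DegLE ι δ (0 : A) m :=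
  ⟨fun _ => 0, by rw [rep_iff]; simp⟩

theorem degle_iota_mul {P : A} {m : ℕ} (c : F) (h : DegLE ι δ P m) :
    DegLE ι δ (ι c * P) m := by
  obtain ⟨b, hb⟩ := h
  rw [rep_iff] at hb
  refine ⟨fun i => c * b i, ?_⟩
  rw [rep_iff, hb, Finset.mul_sum]
  exact Finset.sum_congr rfl fun i _ => by rw [map_mul, mul_assoc]

theorem degle_monomial (c : F) (k : ℕ) : DegLE ι δ (ι c * δ ^ k) k :=
  ⟨_, rep_monomial c k⟩

theorem degle_sum {β : Type*} (s : Finset β) (g : β → A) (m : ℕ)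
    (h : ∀ i ∈ s, DegLE ι δ (g i) m) : DegLE ι δ (∑ i ∈ s, g i) m := by
  classical
  induction s using Finset.induction_on with
  | empty => simpa using degle_zero m
  | insert _ _ hnotmem ih =>
      rw [Finset.sum_insert hnotmem]
      exact degle_add (h _ (Finset.mem_insert_self _ _))
        (ih fun i hi => h i (Finset.mem_insert_of_mem hi))

theorem rep_mul_delta {P : A} {m : ℕ} {b : ℕ → F} (h : Rep ι δ P m b) :
    Rep ι δ (P * δ) (m + 1) (fun i => if i = 0 then 0 else b (i - 1)) := by
  rw [rep_iff] at h ⊢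
  rw [h, Finset.sum_mul,
    Finset.sum_range_succ' (fun i => ι (if i = 0 then (0 : F) else b (i - 1)) * δ ^ i) (m + 1),
    if_pos rfl, map_zero, zero_mul, add_zero]
  exact Finset.sum_congr rfl fun i _ => by
    rw [if_neg (Nat.succ_ne_zero i), Nat.add_sub_cancel, pow_succ, mul_assoc]

theorem delta_mul_eq (hA : IsDiffOpRing d A ι δ) {P : A} {m : ℕ} {b : ℕ → F}
    (h : Rep ι δ P m b) :
    δ * P = P * δ + ∑ i ∈ range (m + 1), ι (d (b i)) * δ ^ i := by
  rw [rep_iff] at h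
  rw [h, Finset.mul_sum, Finset.sum_mul, ← Finset.sum_add_distrib]
  exact Finset.sum_congr rfl fun i _ => by
    rw [← mul_assoc, hA.comm (b i), add_mul, mul_assoc, ← pow_succ', pow_succ, ← mul_assoc]

theorem degle_delta_mul (hA : IsDiffOpRing d A ι δ) {P : A} {m : ℕ}
    (h : DegLE ι δ P m) : DegLE ι δ (δ * P) (m + 1) := by
  obtain ⟨b, hb⟩ := h
  rw [delta_mul_eq hA hb]
  exact degle_add ⟨_, rep_mul_delta hb⟩
    (degle_mono ⟨fun i => d (b i), rfl⟩ (Nat.le_succ m))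

theorem top_plus_low {W : A} {m : ℕ} {x : F} (hW : DegLE ι δ W m) (hx : x ≠ 0) :
    HasDeg ι δ (ι x * δ ^ (m + 1) + W) (m + 1) := by
  obtain ⟨w, hw⟩ := hW
  rw [rep_iff] at hw
  have key : ∑ i ∈ range (m + 1 + 1), ι (if i = m + 1 then x else w i) * δ ^ i
      = ι x * δ ^ (m + 1) + W := by
    rw [Finset.sum_range_succ, if_pos rfl, hw]
    rw [add_comm]
    congr 1
    exact Finset.sum_congr rfl fun i hi => by
      rw [if_neg (by simp only [mem_range] at hi; omega)]
  exact ⟨fun i => if i = m + 1 then x else w i, by simp [hx], key.symm⟩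

theorem degle_pow_iota (hA : IsDiffOpRing d A ι δ) (k : ℕ) (u : F) :
    ∃ R : A, DegLE ι δ R k ∧ δ ^ (k + 1) * ι u = ι u * δ ^ (k + 1) + R := by
  induction k with
  | zero =>
      refine ⟨ι (d u), ?_, ?_⟩
      · refine ⟨fun _ => d u, ?_⟩
        rw [rep_iff]; simp
      · rw [pow_one, hA.comm u]
  | succ k ih =>
      obtain ⟨R, hR, heq⟩ := ih
      refine ⟨ι (d u) * δ ^ (k + 1) + δ * R, degle_add (degle_monomial _ _)
        (degle_delta_mul hA hR), ?_⟩
      have e1 : δ ^ (k + 1 + 1) * ι u = δ * (δ ^ (k + 1) * ι u) := by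
        rw [pow_succ', mul_assoc]
      rw [e1, heq, mul_add, ← mul_assoc, hA.comm u, pow_succ' δ (k + 1)]
      noncomm_ring

theorem degle_mul_iota (hA : IsDiffOpRing d A ι δ) {P : A} {m : ℕ}
    (h : DegLE ι δ P m) (c : F) : DegLE ι δ (P * ι c) m := by
  obtain ⟨b, hb⟩ := h
  rw [rep_iff] at hb
  rw [hb, Finset.sum_mul]
  refine degle_sum _ _ _ fun i hi => ?_
  simp only [mem_range] at hi
  match i with
  | 0 =>
      refine degle_mono ⟨fun _ => b 0 * c, ?_⟩ (Nat.zero_le m)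
      rw [rep_iff]
      simp [map_mul, mul_assoc]
  | Nat.succ k =>
      obtain ⟨R, hR, heq⟩ := degle_pow_iota hA k c
      rw [mul_assoc, heq, mul_add, ← mul_assoc, ← map_mul]
      exact degle_add (degle_mono (degle_monomial _ _) (by omega))
        (degle_mono (degle_iota_mul _ hR) (by omega))

theorem hasDeg_mul_iota (hA : IsDiffOpRing d A ι δ) {P : A} {m : ℕ}
    (h : HasDeg ι δ P m) {c : F} (hc : c ≠ 0) : HasDeg ι δ (P * ι c) m := by
  obtain ⟨b, hbm, hb⟩ := h
  match m with
  | 0 =>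
      refine ⟨fun _ => b 0 * c, mul_ne_zero hbm hc, ?_⟩
      rw [hb]
      simp [map_mul, mul_assoc]
  | Nat.succ m' =>
      obtain ⟨R, hR, heq⟩ := degle_pow_iota hA m' c
      have hsplit : P * ι c = ι (b (m' + 1) * c) * δ ^ (m' + 1)
          + ((∑ i ∈ range (m' + 1), ι (b i) * δ ^ i) * ι c + ι (b (m' + 1)) * R) := by
        rw [hb, Finset.sum_range_succ, add_mul, mul_assoc, heq, map_mul]
        noncomm_ring
      rw [hsplit]
      exact top_plus_low (degle_add (degle_mul_iota hA ⟨b, rfl⟩ c)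
        (degle_iota_mul _ hR)) (mul_ne_zero hbm hc)

theorem hasDeg_mul_delta {P : A} {m : ℕ} (h : HasDeg ι δ P m) :
    HasDeg ι δ (P * δ) (m + 1) := by
  obtain ⟨b, hbm, hb⟩ := h
  refine ⟨fun i => if i = 0 then 0 else b (i - 1), ?_, rep_mul_delta hb⟩
  show (if m + 1 = 0 then (0 : F) else b (m + 1 - 1)) ≠ 0
  rw [if_neg (Nat.succ_ne_zero m), Nat.add_sub_cancel]
  exact hbm

theorem hasDeg_delta_mul (hA : IsDiffOpRing d A ι δ) {P : A} {m : ℕ}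
    (h : HasDeg ι δ P m) : HasDeg ι δ (δ * P) (m + 1) := by
  obtain ⟨b, hbm, hb⟩ := h
  rw [delta_mul_eq hA hb]
  have h1 := rep_mul_delta hb
  have h2 : Rep ι δ (∑ i ∈ range (m + 1), ι (d (b i)) * δ ^ i) m (fun i => d (b i)) := rfl
  have h3 := h2.pad (Nat.le_succ m)
  refine ⟨_, ?_, rep_add h1 h3⟩
  show (if m + 1 = 0 then (0 : F) else b (m + 1 - 1))
      + (if m + 1 ≤ m then d (b (m + 1)) else 0) ≠ 0
  rw [if_neg (Nat.succ_ne_zero m), Nat.add_sub_cancel,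
    if_neg (by omega : ¬ m + 1 ≤ m), add_zero]
  exact hbm

theorem hasDeg_one : HasDeg ι δ (1 : A) 0 :=
  ⟨fun _ => 1, one_ne_zero, by simp⟩

theorem iota_ne_delta_mul (hA : IsDiffOpRing d A ι δ) {B : F} {R : A}
    (h : ι B = δ * R) : B = 0 := by
  by_cases hR : R = 0
  · subst hR
    rw [mul_zero] at h
    have : Rep ι δ (0 : A) 0 (fun _ => B) := by
      rw [rep_iff]
      simp [← h]
    exact rep_zero hA this 0 le_rfl
  · by_contra hB
    obtain ⟨m, hm⟩ := exists_hasDeg hA hR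
    have h1 : HasDeg ι δ (ι B) (m + 1) := h ▸ hasDeg_delta_mul hA hm
    have h2 : HasDeg ι δ (ι B) 0 := ⟨fun _ => B, hB, by simp⟩
    exact Nat.succ_ne_zero m (deg_unique hA h1 h2)

end PolesAux3
namespace PolesAux4
open Finset PolesAux PolesAux2 PolesAux3

variable {F : Type*} [Field F] {d : F → F} {A : Type*} [Ring A]
variable {ι : F →+* A} {δ : A} {K : Type*} [DivisionRing K] {j : A →+* K}

theorem nontrivial_A (hK : IsQuotientDivisionRing A K j) : Nontrivial A :=
  ⟨0, 1, fun h => zero_ne_one (α := K) (by rw [← map_zero j, ← map_one j, h])⟩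

theorem hasDeg_delta (hA : IsDiffOpRing d A ι δ) : HasDeg ι δ δ 1 := by
  refine ⟨fun i => if i = 1 then 1 else 0, by simp, ?_⟩
  rw [show (1 : ℕ) + 1 = 2 from rfl, Finset.sum_range_succ, Finset.sum_range_one]
  simp

theorem delta_ne_zero (hA : IsDiffOpRing d A ι δ) : δ ≠ 0 :=
  hasDeg_ne_zero hA (hasDeg_delta hA)

theorem j_delta_ne_zero (hA : IsDiffOpRing d A ι δ)
    (hK : IsQuotientDivisionRing A K j) : j δ ≠ 0 := fun h =>
  delta_ne_zero hA (hK.inj (by rw [h, map_zero]))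

theorem iota_ne_zero (hK : IsQuotientDivisionRing A K j) {u : F} (hu : u ≠ 0) :
    ι u ≠ 0 := by
  haveI := nontrivial_A hK
  intro h
  have : (1 : A) = 0 := by
    rw [← map_one ι, ← mul_inv_cancel₀ hu, map_mul, h, zero_mul]
  exact one_ne_zero this

theorem j_iota_ne_zero (hK : IsQuotientDivisionRing A K j) {u : F} (hu : u ≠ 0) :
    j (ι u) ≠ 0 := fun h => iota_ne_zero hK hu (hK.inj (by rw [h, map_zero]))

theorem j_iota_inv (hK : IsQuotientDivisionRing A K j) {u : F} (hu : u ≠ 0) :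
    (j (ι u))⁻¹ = j (ι u⁻¹) := by
  symm
  apply eq_inv_of_mul_eq_one_left
  rw [← map_mul, ← map_mul, inv_mul_cancel₀ hu, map_one, map_one]

theorem inv_comm_of_comm {a b : K} (hb : b ≠ 0) (h : b * a = a * b) :
    a * b⁻¹ = b⁻¹ * a := by
  calc a * b⁻¹ = b⁻¹ * (b * a) * b⁻¹ := by
        rw [← mul_assoc, inv_mul_cancel₀ hb, one_mul]
    _ = b⁻¹ * (a * b) * b⁻¹ := by rw [h]
    _ = b⁻¹ * a := by rw [mul_assoc, mul_assoc, mul_inv_cancel₀ hb, mul_one]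

theorem const_comm_inv_delta (hd : IsDerivation d) (hA : IsDiffOpRing d A ι δ)
    (hK : IsQuotientDivisionRing A K j) {γ : F} (hγ : d γ = 0) :
    j (ι γ) * (j δ)⁻¹ = (j δ)⁻¹ * j (ι γ) := by
  apply inv_comm_of_comm (j_delta_ne_zero hA hK)
  rw [← map_mul, ← map_mul, hA.comm γ, hγ, map_zero, add_zero]

/-- Integration by parts in `K`: `∂ (u ∂⁻¹ β) = u β + u' ∂⁻¹ β`. -/
theorem exp_term (hA : IsDiffOpRing d A ι δ) (hK : IsQuotientDivisionRing A K j)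
    (u β : F) :
    j δ * (j (ι u) * (j δ)⁻¹ * j (ι β))
      = j (ι (u * β)) + j (ι (d u)) * (j δ)⁻¹ * j (ι β) := by
  have h1 : j δ * j (ι u) = j (ι u) * j δ + j (ι (d u)) := by
    rw [← map_mul, ← map_mul, ← map_add, hA.comm u]
  rw [← mul_assoc, ← mul_assoc, h1, add_mul, add_mul, mul_assoc (j (ι u)),
    mul_inv_cancel₀ (j_delta_ne_zero hA hK), mul_one, ← map_mul, ← map_mul]

/-- Key lemma: if `Σ_{i∈s} cᵢ ∂⁻¹ βᵢ ∈ F⟨∂⟩` with the `βᵢ` linearly independent over the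
constants, then all `cᵢ = 0`. -/
theorem no_singular_part (hd : IsDerivation d) (hA : IsDiffOpRing d A ι δ)
    (hK : IsQuotientDivisionRing A K j) (N : ℕ) :
    ∀ (s : Finset ℕ) (c β : ℕ → F) (R : A), s.card = N →
    (∀ γ : ℕ → F, (∀ i ∈ s, d (γ i) = 0) → ∑ i ∈ s, γ i * β i = 0 →
      ∀ i ∈ s, γ i = 0) →
    (∑ i ∈ s, j (ι (c i)) * (j δ)⁻¹ * j (ι (β i))) = j R →
    ∀ i ∈ s, c i = 0 := by
  have hδ : j δ ≠ 0 := j_delta_ne_zero hA hK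
  induction N with
  | zero =>
      intro s c β R hcard _ _ i hi
      rw [Finset.card_eq_zero.1 hcard] at hi
      exact absurd hi (Finset.notMem_empty i)
  | succ N ih =>
      intro s c β R hcard hindep hsum
      by_contra hcon
      push_neg at hcon
      obtain ⟨k, hk, hck⟩ := hcon
      have hckj : j (ι (c k)) ≠ 0 := j_iota_ne_zero hK hck
      -- multiply the equation on the left by `∂ (c k)⁻¹`
      have e0 := congrArg (fun x => j δ * (j (ι ((c k)⁻¹)) * x)) hsum
      simp only [Finset.mul_sum] at e0
      have e1 : ∀ i ∈ s,
          j δ * (j (ι ((c k)⁻¹)) * (j (ι (c i)) * (j δ)⁻¹ * j (ι (β i))))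
            = j (ι (((c k)⁻¹ * c i) * β i))
              + j (ι (d ((c k)⁻¹ * c i))) * (j δ)⁻¹ * j (ι (β i)) := by
        intro i _
        have h2 : j (ι ((c k)⁻¹)) * (j (ι (c i)) * (j δ)⁻¹ * j (ι (β i)))
            = j (ι ((c k)⁻¹ * c i)) * (j δ)⁻¹ * j (ι (β i)) := by
          rw [← mul_assoc, ← mul_assoc, ← map_mul, ← map_mul]
        rw [h2, exp_term hA hK]
      rw [Finset.sum_congr rfl e1, Finset.sum_add_distrib] at e0
      have step1 : ∑ i ∈ s, j (ι (d ((c k)⁻¹ * c i))) * (j δ)⁻¹ * j (ι (β i))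
          = j (δ * (ι ((c k)⁻¹) * R) - ∑ i ∈ s, ι (((c k)⁻¹ * c i) * β i)) := by
        rw [map_sub, map_mul, map_mul, map_sum]
        exact eq_sub_of_add_eq' e0
      have hterm : j (ι (d ((c k)⁻¹ * c k))) * (j δ)⁻¹ * j (ι (β k)) = 0 := by
        rw [inv_mul_cancel₀ hck, hd.map_one', map_zero, map_zero, zero_mul, zero_mul]
      have hsing : ∑ i ∈ s.erase k,
          j (ι (d ((c k)⁻¹ * c i))) * (j δ)⁻¹ * j (ι (β i))
          = j (δ * (ι ((c k)⁻¹) * R) - ∑ i ∈ s, ι (((c k)⁻¹ * c i) * β i)) := by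
        rw [Finset.sum_erase s hterm]
        exact step1
      have hcard' : (s.erase k).card = N := by
        rw [Finset.card_erase_of_mem hk, hcard]
        omega
      have hindep' : ∀ γ : ℕ → F, (∀ i ∈ s.erase k, d (γ i) = 0) →
          ∑ i ∈ s.erase k, γ i * β i = 0 → ∀ i ∈ s.erase k, γ i = 0 := by
        intro γ hγ hsγ i hi
        have hres := hindep (Function.update γ k 0)
          (fun i hi' => by
            by_cases hik : i = k
            · subst hik
              rw [Function.update_self]
              exact hd.map_zero'
            · rw [Function.update_of_ne hik]
              exact hγ i (Finset.mem_erase.2 ⟨hik, hi'⟩))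
          (by
            rw [← Finset.sum_erase_add s _ hk, Function.update_self, zero_mul,
              add_zero, ← hsγ]
            exact Finset.sum_congr rfl fun i hi' => by
              rw [Function.update_of_ne (Finset.mem_erase.1 hi').1])
          i (Finset.mem_of_mem_erase hi)
        rwa [Function.update_of_ne (Finset.mem_erase.1 hi).1] at hres
      have hdu' := ih (s.erase k) (fun i => d ((c k)⁻¹ * c i)) β _ hcard' hindep' hsing
      have hdu : ∀ i ∈ s, d ((c k)⁻¹ * c i) = 0 := by
        intro i hi
        by_cases hik : i = k
        · rw [hik, inv_mul_cancel₀ hck, hd.map_one']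
        · exact hdu' i (Finset.mem_erase.2 ⟨hik, hi⟩)
      set B := ∑ i ∈ s, ((c k)⁻¹ * c i) * β i with hB_def
      have hB : B ≠ 0 := by
        intro h0
        have h1 : (c k)⁻¹ * c k = 0 := hindep (fun i => (c k)⁻¹ * c i) hdu h0 k hk
        rw [inv_mul_cancel₀ hck] at h1
        exact one_ne_zero h1
      have e3 : ∀ i ∈ s, j (ι (c i)) * (j δ)⁻¹ * j (ι (β i))
          = j (ι (c k)) * ((j δ)⁻¹ * j (ι (((c k)⁻¹ * c i) * β i))) := by
        intro i hi
        have h1 : c i = c k * ((c k)⁻¹ * c i) := by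
          rw [← mul_assoc, mul_inv_cancel₀ hck, one_mul]
        calc j (ι (c i)) * (j δ)⁻¹ * j (ι (β i))
            = j (ι (c k)) * j (ι ((c k)⁻¹ * c i)) * (j δ)⁻¹ * j (ι (β i)) := by
              rw [← map_mul, ← map_mul, ← h1]
          _ = j (ι (c k)) * (j (ι ((c k)⁻¹ * c i)) * (j δ)⁻¹) * j (ι (β i)) := by
              rw [mul_assoc (j (ι (c k))) (j (ι ((c k)⁻¹ * c i))) ((j δ)⁻¹)]
          _ = j (ι (c k)) * ((j δ)⁻¹ * j (ι ((c k)⁻¹ * c i))) * j (ι (β i)) := by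
              rw [const_comm_inv_delta hd hA hK (hdu i hi)]
          _ = j (ι (c k)) * ((j δ)⁻¹ * (j (ι ((c k)⁻¹ * c i)) * j (ι (β i)))) := by
              rw [mul_assoc (j (ι (c k))) _ (j (ι (β i))),
                mul_assoc ((j δ)⁻¹) _ (j (ι (β i)))]
          _ = j (ι (c k)) * ((j δ)⁻¹ * j (ι (((c k)⁻¹ * c i) * β i))) := by
              rw [← map_mul, ← map_mul]
      rw [Finset.sum_congr rfl e3, ← Finset.mul_sum, ← Finset.mul_sum,
        ← map_sum j, ← map_sum ι] at hsum
      have h5 : (j δ)⁻¹ * j (ι B) = j (ι ((c k)⁻¹)) * j R := by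
        calc (j δ)⁻¹ * j (ι B)
            = (j (ι (c k)))⁻¹ * (j (ι (c k)) * ((j δ)⁻¹ * j (ι B))) := by
              rw [← mul_assoc, inv_mul_cancel₀ hckj, one_mul]
          _ = (j (ι (c k)))⁻¹ * j R := by rw [hsum]
          _ = j (ι ((c k)⁻¹)) * j R := by rw [j_iota_inv hK hck]
      have h6 : j (ι B) = j (δ * (ι ((c k)⁻¹) * R)) := by
        calc j (ι B) = j δ * ((j δ)⁻¹ * j (ι B)) := by
              rw [← mul_assoc, mul_inv_cancel₀ hδ, one_mul]
          _ = j δ * (j (ι ((c k)⁻¹)) * j R) := by rw [h5]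
          _ = j (δ * (ι ((c k)⁻¹) * R)) := by rw [map_mul, map_mul]
      exact hB (iota_ne_delta_mul hA (hK.inj h6))

end PolesAux4
namespace PolesAux5
open Finset PolesAux PolesAux2 PolesAux3 PolesAux4

variable {F : Type*} [Field F] {d : F → F} {A : Type*} [Ring A]
variable {ι : F →+* A} {δ : A} {K : Type*} [DivisionRing K] {j : A →+* K}
variable {act : A → F → F}

theorem deriv_sum (hd : IsDerivation d) {β : Type*} (s : Finset β) (h : β → F) :
    d (∑ i ∈ s, h i) = ∑ i ∈ s, d (h i) := by
  classical
  induction s using Finset.induction_on with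
  | empty => simpa using hd.map_zero'
  | insert _ _ hnotmem ih =>
      rw [Finset.sum_insert hnotmem, Finset.sum_insert hnotmem, hd.map_add, ih]

/-- If `f = g + Σ_{i∈s} αᵢ ∂⁻¹ βᵢ` with `g ∈ F⟨∂⟩`, then `f` has a presentation `P'⁻¹ Q'`
with `deg P' ≤ |s|`. -/
theorem reduce (hd : IsDerivation d) (hA : IsDiffOpRing d A ι δ)
    (hK : IsQuotientDivisionRing A K j) (N : ℕ) :
    ∀ (s : Finset ℕ) (g : A) (α β : ℕ → F) (f : K), s.card = N →
    f = j g + ∑ i ∈ s, j (ι (α i)) * (j δ)⁻¹ * j (ι (β i)) →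
    ∃ (P' Q' : A) (m' : ℕ), P' ≠ 0 ∧ f = (j P')⁻¹ * j Q' ∧ HasDeg ι δ P' m' ∧ m' ≤ N := by
  have hδ : j δ ≠ 0 := j_delta_ne_zero hA hK
  haveI := nontrivial_A hK
  induction N with
  | zero =>
      intro s g α β f hcard heq
      rw [Finset.card_eq_zero.1 hcard, Finset.sum_empty, add_zero] at heq
      exact ⟨1, g, 0, one_ne_zero,
        by rw [map_one, inv_one, one_mul]; exact heq, hasDeg_one, le_rfl⟩
  | succ N ih =>
      intro s g α β f hcard heq
      obtain ⟨k, hk⟩ := Finset.card_pos.1 (by omega : 0 < s.card)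
      by_cases hα : α k = 0
      · have hterm : j (ι (α k)) * (j δ)⁻¹ * j (ι (β k)) = 0 := by
          rw [hα, map_zero, map_zero, zero_mul, zero_mul]
        have heq' : f = j g + ∑ i ∈ s.erase k,
            j (ι (α i)) * (j δ)⁻¹ * j (ι (β i)) := by
          rw [heq, Finset.sum_erase s hterm]
        obtain ⟨P', Q', m', h1, h2, h3, h4⟩ := ih (s.erase k) g α β f
          (by rw [Finset.card_erase_of_mem hk, hcard]; omega) heq'
        exact ⟨P', Q', m', h1, h2, h3, le_trans h4 (Nat.le_succ N)⟩
      · set v := (α k)⁻¹ with hv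
        have hvne : v ≠ 0 := inv_ne_zero hα
        have e1 : ∀ i ∈ s, j δ * (j (ι v) * (j (ι (α i)) * (j δ)⁻¹ * j (ι (β i))))
            = j (ι ((v * α i) * β i))
              + j (ι (d (v * α i))) * (j δ)⁻¹ * j (ι (β i)) := by
          intro i _
          have h2 : j (ι v) * (j (ι (α i)) * (j δ)⁻¹ * j (ι (β i)))
              = j (ι (v * α i)) * (j δ)⁻¹ * j (ι (β i)) := by
            rw [← mul_assoc, ← mul_assoc, ← map_mul, ← map_mul]
          rw [h2, exp_term hA hK]
        have e0 : j δ * (j (ι v) * f)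
            = j (δ * (ι v * g) + ∑ i ∈ s, ι ((v * α i) * β i))
              + ∑ i ∈ s, j (ι (d (v * α i))) * (j δ)⁻¹ * j (ι (β i)) := by
          calc j δ * (j (ι v) * f)
              = j δ * (j (ι v) * j g) + j δ * (j (ι v) *
                  (∑ i ∈ s, j (ι (α i)) * (j δ)⁻¹ * j (ι (β i)))) := by
                rw [heq, mul_add, mul_add]
            _ = j (δ * (ι v * g)) + ∑ i ∈ s,
                  j δ * (j (ι v) * (j (ι (α i)) * (j δ)⁻¹ * j (ι (β i)))) := by
                rw [map_mul, map_mul, Finset.mul_sum, Finset.mul_sum]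
            _ = j (δ * (ι v * g)) + ∑ i ∈ s, (j (ι ((v * α i) * β i))
                  + j (ι (d (v * α i))) * (j δ)⁻¹ * j (ι (β i))) := by
                rw [Finset.sum_congr rfl e1]
            _ = (j (δ * (ι v * g)) + ∑ i ∈ s, j (ι ((v * α i) * β i)))
                  + ∑ i ∈ s, j (ι (d (v * α i))) * (j δ)⁻¹ * j (ι (β i)) := by
                rw [Finset.sum_add_distrib, add_assoc]
            _ = j (δ * (ι v * g) + ∑ i ∈ s, ι ((v * α i) * β i))
                  + ∑ i ∈ s, j (ι (d (v * α i))) * (j δ)⁻¹ * j (ι (β i)) := by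
                rw [map_add, map_sum]
        have hterm : j (ι (d (v * α k))) * (j δ)⁻¹ * j (ι (β k)) = 0 := by
          rw [hv, inv_mul_cancel₀ hα, hd.map_one', map_zero, map_zero,
            zero_mul, zero_mul]
        have e2 : j δ * (j (ι v) * f)
            = j (δ * (ι v * g) + ∑ i ∈ s, ι ((v * α i) * β i))
              + ∑ i ∈ s.erase k,
                  j (ι (d (v * α i))) * (j δ)⁻¹ * j (ι (β i)) := by
          rw [e0, Finset.sum_erase s hterm]
        obtain ⟨P₁, Q₁, m₁, hP₁, hfeq, hdeg₁, hm₁⟩ := ih (s.erase k)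
          (δ * (ι v * g) + ∑ i ∈ s, ι ((v * α i) * β i))
          (fun i => d (v * α i)) β (j δ * (j (ι v) * f))
          (by rw [Finset.card_erase_of_mem hk, hcard]; omega) e2
        have hrecover : f = j (ι (α k)) * ((j δ)⁻¹ * (j δ * (j (ι v) * f))) := by
          rw [← mul_assoc ((j δ)⁻¹) (j δ), inv_mul_cancel₀ hδ, one_mul,
            ← mul_assoc, ← map_mul, ← map_mul, hv, mul_inv_cancel₀ hα,
            map_one, map_one, one_mul]
        have hP'deg : HasDeg ι δ (P₁ * δ * ι v) (m₁ + 1) :=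
          hasDeg_mul_iota hA (hasDeg_mul_delta hdeg₁) hvne
        have hfinal : f = (j (P₁ * δ * ι v))⁻¹ * j Q₁ := by
          have h7 : (j (P₁ * δ * ι v))⁻¹
              = j (ι (α k)) * ((j δ)⁻¹ * (j P₁)⁻¹) := by
            rw [map_mul, map_mul, mul_inv_rev, mul_inv_rev,
              j_iota_inv hK hvne, hv, inv_inv]
          rw [h7, mul_assoc, mul_assoc, ← hfeq, ← hrecover]
        exact ⟨P₁ * δ * ι v, Q₁, m₁ + 1, hasDeg_ne_zero hA hP'deg, hfinal,
          hP'deg, by omega⟩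

/-- Any `n+1` solutions of an operator of degree `n` are linearly dependent over constants. -/
theorem solutions_dependent (hd : IsDerivation d) (hA : IsDiffOpRing d A ι δ)
    (hact : ∀ (m : ℕ) (b : ℕ → F),
      act (∑ i ∈ Finset.range (m + 1), ι (b i) * δ ^ i) = diffOpAct d m b) :
    ∀ (n : ℕ) (P : A), HasDeg ι δ P n → ∀ y : Fin (n + 1) → F,
    (∀ i, act P (y i) = 0) →
    ∃ γ : Fin (n + 1) → F, (∀ i, d (γ i) = 0) ∧ (∑ i, γ i * y i = 0) ∧ ∃ i, γ i ≠ 0 := by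
  intro n
  induction n with
  | zero =>
      intro P hdeg y hy
      refine ⟨fun _ => 1, fun _ => hd.map_one', ?_, ⟨0, one_ne_zero⟩⟩
      obtain ⟨b, hb0, hrep⟩ := hdeg
      have h1 := hy 0
      rw [act_rep hact hrep] at h1
      simp only [Finset.sum_range_succ, Finset.sum_range_zero, zero_add, Function.iterate_zero, id_eq] at h1
      have hy0 : y 0 = 0 := (mul_eq_zero.1 h1).resolve_left hb0
      rw [Fin.sum_univ_one, hy0, mul_zero]
  | succ n ih =>
      intro P hdeg y hy
      by_cases hy0 : y 0 = 0
      · refine ⟨Fin.cons 1 (fun _ => 0), ?_, ?_,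
          ⟨0, by rw [Fin.cons_zero]; exact one_ne_zero⟩⟩
        · intro i
          refine Fin.cases ?_ ?_ i
          · rw [Fin.cons_zero]; exact hd.map_one'
          · intro i'
            simp only [Fin.cons_succ]
            exact hd.map_zero'
        · rw [Fin.sum_univ_succ, Fin.cons_zero, hy0, mul_zero, zero_add]
          refine Finset.sum_eq_zero fun i _ => ?_
          simp only [Fin.cons_succ]
          exact zero_mul _
      · obtain ⟨S, hS⟩ := mul_iota_split hA hact P (y 0)
        rw [hy 0, map_zero, add_zero] at hS
        have hPy0 : HasDeg ι δ (P * ι (y 0)) (n + 1) := hasDeg_mul_iota hA hdeg hy0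
        have hSne : S ≠ 0 := by
          intro h0
          rw [h0, zero_mul] at hS
          exact hasDeg_ne_zero hA hPy0 hS
        obtain ⟨m, hm⟩ := exists_hasDeg hA hSne
        have hmn : m = n := by
          have h2 := deg_unique hA (hS ▸ hasDeg_mul_delta hm) hPy0
          omega
        rw [hmn] at hm
        have hzsol : ∀ i : Fin (n + 1), act S (d (y i.succ * (y 0)⁻¹)) = 0 := by
          intro i
          have e3 : y 0 * (y i.succ * (y 0)⁻¹) = y i.succ := by
            field_simp
          calc act S (d (y i.succ * (y 0)⁻¹))
              = act (S * δ) (y i.succ * (y 0)⁻¹) := (act_mul_delta hA hact S _).symm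
            _ = act (P * ι (y 0)) (y i.succ * (y 0)⁻¹) := by rw [hS]
            _ = act P (y 0 * (y i.succ * (y 0)⁻¹)) := act_mul_iota hA hd hact P _ _
            _ = act P (y i.succ) := by rw [e3]
            _ = 0 := hy i.succ
        obtain ⟨γ, hγconst, hγsum, i₀, hi₀⟩ :=
          ih S hm (fun i => d (y i.succ * (y 0)⁻¹)) hzsol
        set w : F := ∑ i : Fin (n + 1), γ i * (y i.succ * (y 0)⁻¹) with hw_def
        have hpt : ∀ i : Fin (n + 1), d (γ i * (y i.succ * (y 0)⁻¹))
            = γ i * d (y i.succ * (y 0)⁻¹) := fun i => by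
          rw [hd.leibniz, hγconst i, zero_mul, zero_add]
        have hw : d w = 0 := by
          rw [hw_def, deriv_sum hd, Finset.sum_congr rfl (fun i _ => hpt i)]
          exact hγsum
        refine ⟨Fin.cons (-w) γ, ?_, ?_, ⟨i₀.succ, by rwa [Fin.cons_succ]⟩⟩
        · intro i
          refine Fin.cases ?_ ?_ i
          · rw [Fin.cons_zero, hd.map_neg', hw, neg_zero]
          · intro i'
            rw [Fin.cons_succ]
            exact hγconst i'
        · rw [Fin.sum_univ_succ, Fin.cons_zero]
          have hpt2 : ∀ i : Fin (n + 1),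
              (Fin.cons (-w) γ : Fin (n + 1 + 1) → F) i.succ * y i.succ
                = (γ i * (y i.succ * (y 0)⁻¹)) * y 0 := fun i => by
            rw [Fin.cons_succ]
            field_simp
          have hsum2 : ∑ i : Fin (n + 1),
              (Fin.cons (-w) γ : Fin (n + 1 + 1) → F) i.succ * y i.succ = w * y 0 := by
            rw [Finset.sum_congr rfl (fun i _ => hpt2 i), ← Finset.sum_mul, ← hw_def]
          rw [hsum2, neg_mul, neg_add_cancel]

end PolesAux5
namespace PolesAux6
open Finset PolesAux PolesAux2 PolesAux3 PolesAux4 PolesAux5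

variable {F : Type*} [Field F] {d : F → F} {A : Type*} [Ring A]
variable {ι : F →+* A} {δ : A} {K : Type*} [DivisionRing K] {j : A →+* K}

/-- Moving a constant through `∂⁻¹`. -/
theorem term_shift (hd : IsDerivation d) (hA : IsDiffOpRing d A ι δ)
    (hK : IsQuotientDivisionRing A K j) {c : F} (u β : F) (hc : d c = 0) :
    j (ι u) * (j δ)⁻¹ * j (ι (c * β)) = j (ι (c * u)) * (j δ)⁻¹ * j (ι β) := by
  calc j (ι u) * (j δ)⁻¹ * j (ι (c * β))
      = j (ι u) * (j δ)⁻¹ * (j (ι c) * j (ι β)) := by rw [map_mul, map_mul]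
    _ = j (ι u) * ((j δ)⁻¹ * j (ι c)) * j (ι β) := by
        rw [← mul_assoc, mul_assoc (j (ι u)) ((j δ)⁻¹) (j (ι c))]
    _ = j (ι u) * (j (ι c) * (j δ)⁻¹) * j (ι β) := by
        rw [← const_comm_inv_delta hd hA hK hc]
    _ = j (ι (c * u)) * (j δ)⁻¹ * j (ι β) := by
        rw [← mul_assoc, ← map_mul, ← map_mul, mul_comm u c]

end PolesAux6
/-- Let `I = a + Σ_{i=1}^n aᵢ ∂⁻¹ bᵢ ∈ F⟨∂⁻¹⟩` with `n = L(I)`. Then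
`Pol(I) = C a₁ + ⋯ + C aₙ`, the `C`-linear span of `a₁, …, aₙ` (where `Pol(I) = Zer(P)` for a
minimal presentation `I = P⁻¹ Q`). -/
theorem poles_of_integration_operator {F : Type*} [Field F] [CharZero F]
    (d : F → F) (hd : IsDerivation d)
    (halg : IsAlgClosed (constants F d hd))
    (hne : constants F d hd ≠ ⊤)
    {A : Type*} [Ring A] (ι : F →+* A) (δ : A) (hA : IsDiffOpRing d A ι δ)
    (act : A → F → F)
    (hact : ∀ (m : ℕ) (b : ℕ → F),
      act (∑ i ∈ Finset.range (m + 1), ι (b i) * δ ^ i) = diffOpAct d m b)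
    {K : Type*} [DivisionRing K] (j : A →+* K) (hK : IsQuotientDivisionRing A K j)
    (n : ℕ) (a : F) (aa bb : ℕ → F) (f : K)
    (hf : f = j (ι a) + ∑ i ∈ Finset.range n, j (ι (aa i)) * (j δ)⁻¹ * j (ι (bb i)))
    (hn : HasLength ι δ j f n)
    (P Q : A) (hPQ : IsMinPres ι δ j f P Q) :
    {y : F | act P y = 0}
      = (Submodule.span (constants F d hd) (Set.range fun i : Fin n => aa i) : Set F) := by
  classical
  open PolesAux PolesAux2 PolesAux3 PolesAux4 PolesAux5 PolesAux6 in
  · have hδ : j δ ≠ 0 := j_delta_ne_zero hA hK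
    obtain ⟨Pne, hfPQ, hmin⟩ := hPQ
    have hjP : j P ≠ 0 := fun h => Pne (hK.inj (by rw [h, map_zero]))
    -- `P` has degree `n`
    obtain ⟨m₀, hm₀⟩ := exists_hasDeg hA Pne
    obtain ⟨P₀, Q₀, hP₀ne, hP₀eq, hP₀deg⟩ := hn.1
    have h1 : m₀ ≤ n := hmin P₀ Q₀ m₀ n hP₀ne hP₀eq hm₀ hP₀deg
    have h2 : n ≤ m₀ := hn.2 P Q m₀ Pne hfPQ hm₀
    have hPdeg : HasDeg ι δ P n := by
      rw [show n = m₀ by omega]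
      exact hm₀
    -- constants membership
    have hmemd : ∀ x : F, x ∈ constants F d hd → d x = 0 := fun x hx => hx
    have hCneg : ∀ x : F, d x = 0 → d (-x) = 0 := fun x hx =>
      hmemd _ (Subfield.neg_mem _ hx)
    have hCinv : ∀ x : F, d x = 0 → d x⁻¹ = 0 := fun x hx =>
      hmemd _ (Subfield.inv_mem _ hx)
    have hCmul : ∀ x y : F, d x = 0 → d y = 0 → d (x * y) = 0 := fun x y hx hy =>
      hmemd _ (Subfield.mul_mem _ hx hy)
    -- Step: independence of the `bb i`, `i < n`, over constants
    have hbbindep : ∀ γ : ℕ → F, (∀ i ∈ Finset.range n, d (γ i) = 0) →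
        ∑ i ∈ Finset.range n, γ i * bb i = 0 → ∀ i ∈ Finset.range n, γ i = 0 := by
      by_contra hcon
      push_neg at hcon
      obtain ⟨γ, hγc, hγs, k, hkmem, hγk⟩ := hcon
      have hkn : k < n := Finset.mem_range.1 hkmem
      have hcc : ∀ i ∈ Finset.range n, d (-(γ k)⁻¹ * γ i) = 0 := fun i hi =>
        hCmul _ _ (hCneg _ (hCinv _ (hγc k hkmem))) (hγc i hi)
      have h3 : ∑ i ∈ (Finset.range n).erase k, γ i * bb i + γ k * bb k = 0 := by
        rw [Finset.sum_erase_add _ _ hkmem]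
        exact hγs
      have h4 : γ k * bb k = -∑ i ∈ (Finset.range n).erase k, γ i * bb i :=
        eq_neg_of_add_eq_zero_right h3
      have hbbk : bb k = ∑ i ∈ (Finset.range n).erase k, (-(γ k)⁻¹ * γ i) * bb i := by
        calc bb k = (γ k)⁻¹ * (γ k * bb k) := by
              rw [← mul_assoc, inv_mul_cancel₀ hγk, one_mul]
          _ = (γ k)⁻¹ * -∑ i ∈ (Finset.range n).erase k, γ i * bb i := by rw [h4]
          _ = ∑ i ∈ (Finset.range n).erase k, (-(γ k)⁻¹ * γ i) * bb i := by
              rw [mul_neg, Finset.mul_sum, ← Finset.sum_neg_distrib]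
              exact Finset.sum_congr rfl fun i _ => by ring
      have hTk : j (ι (aa k)) * (j δ)⁻¹ * j (ι (bb k))
          = ∑ i ∈ (Finset.range n).erase k,
              j (ι ((-(γ k)⁻¹ * γ i) * aa k)) * (j δ)⁻¹ * j (ι (bb i)) := by
        rw [hbbk, map_sum ι, map_sum j, Finset.mul_sum]
        exact Finset.sum_congr rfl fun i hi =>
          term_shift hd hA hK (aa k) (bb i) (hcc i (Finset.mem_of_mem_erase hi))
      have hstep : ∑ i ∈ Finset.range n, j (ι (aa i)) * (j δ)⁻¹ * j (ι (bb i))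
          = ∑ i ∈ (Finset.range n).erase k,
              j (ι (aa i + (-(γ k)⁻¹ * γ i) * aa k)) * (j δ)⁻¹ * j (ι (bb i)) := by
        rw [← Finset.sum_erase_add _ _ hkmem, hTk, ← Finset.sum_add_distrib]
        exact Finset.sum_congr rfl fun i _ => by rw [map_add, map_add, add_mul, add_mul]
      have hf' : f = j (ι a) + ∑ i ∈ (Finset.range n).erase k,
          j (ι (aa i + (-(γ k)⁻¹ * γ i) * aa k)) * (j δ)⁻¹ * j (ι (bb i)) := by
        rw [hf, hstep]
      obtain ⟨P', Q', m', hP'ne, hP'eq, hP'deg, hm'⟩ :=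
        reduce hd hA hK ((Finset.range n).erase k).card ((Finset.range n).erase k)
          (ι a) (fun i => aa i + (-(γ k)⁻¹ * γ i) * aa k) bb f rfl hf'
      have h5 := hn.2 P' Q' m' hP'ne hP'eq hP'deg
      have h6 : ((Finset.range n).erase k).card = n - 1 := by
        rw [Finset.card_erase_of_mem hkmem, Finset.card_range]
      omega
    -- Step: independence of the `aa i`, `i < n`, over constants
    have haaindep : ∀ γ : ℕ → F, (∀ i ∈ Finset.range n, d (γ i) = 0) →
        ∑ i ∈ Finset.range n, γ i * aa i = 0 → ∀ i ∈ Finset.range n, γ i = 0 := by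
      by_contra hcon
      push_neg at hcon
      obtain ⟨γ, hγc, hγs, k, hkmem, hγk⟩ := hcon
      have hkn : k < n := Finset.mem_range.1 hkmem
      have hcc : ∀ i ∈ Finset.range n, d (-(γ k)⁻¹ * γ i) = 0 := fun i hi =>
        hCmul _ _ (hCneg _ (hCinv _ (hγc k hkmem))) (hγc i hi)
      have h3 : ∑ i ∈ (Finset.range n).erase k, γ i * aa i + γ k * aa k = 0 := by
        rw [Finset.sum_erase_add _ _ hkmem]
        exact hγs
      have h4 : γ k * aa k = -∑ i ∈ (Finset.range n).erase k, γ i * aa i :=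
        eq_neg_of_add_eq_zero_right h3
      have haak : aa k = ∑ i ∈ (Finset.range n).erase k, (-(γ k)⁻¹ * γ i) * aa i := by
        calc aa k = (γ k)⁻¹ * (γ k * aa k) := by
              rw [← mul_assoc, inv_mul_cancel₀ hγk, one_mul]
          _ = (γ k)⁻¹ * -∑ i ∈ (Finset.range n).erase k, γ i * aa i := by rw [h4]
          _ = ∑ i ∈ (Finset.range n).erase k, (-(γ k)⁻¹ * γ i) * aa i := by
              rw [mul_neg, Finset.mul_sum, ← Finset.sum_neg_distrib]
              exact Finset.sum_congr rfl fun i _ => by ring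
      have hTk : j (ι (aa k)) * (j δ)⁻¹ * j (ι (bb k))
          = ∑ i ∈ (Finset.range n).erase k,
              j (ι (aa i)) * (j δ)⁻¹ * j (ι ((-(γ k)⁻¹ * γ i) * bb k)) := by
        rw [haak, map_sum ι, map_sum j, Finset.sum_mul, Finset.sum_mul]
        exact Finset.sum_congr rfl fun i hi =>
          (term_shift hd hA hK (aa i) (bb k) (hcc i (Finset.mem_of_mem_erase hi))).symm
      have hstep : ∑ i ∈ Finset.range n, j (ι (aa i)) * (j δ)⁻¹ * j (ι (bb i))
          = ∑ i ∈ (Finset.range n).erase k,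
              j (ι (aa i)) * (j δ)⁻¹ * j (ι (bb i + (-(γ k)⁻¹ * γ i) * bb k)) := by
        rw [← Finset.sum_erase_add _ _ hkmem, hTk, ← Finset.sum_add_distrib]
        exact Finset.sum_congr rfl fun i _ => by rw [map_add, map_add, mul_add]
      have hf' : f = j (ι a) + ∑ i ∈ (Finset.range n).erase k,
          j (ι (aa i)) * (j δ)⁻¹ * j (ι (bb i + (-(γ k)⁻¹ * γ i) * bb k)) := by
        rw [hf, hstep]
      obtain ⟨P', Q', m', hP'ne, hP'eq, hP'deg, hm'⟩ :=
        reduce hd hA hK ((Finset.range n).erase k).card ((Finset.range n).erase k)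
          (ι a) aa (fun i => bb i + (-(γ k)⁻¹ * γ i) * bb k) f rfl hf'
      have h5 := hn.2 P' Q' m' hP'ne hP'eq hP'deg
      have h6 : ((Finset.range n).erase k).card = n - 1 := by
        rw [Finset.card_erase_of_mem hkmem, Finset.card_range]
      omega
    -- Step: each `aa i` is a zero of `P`
    have hQf : j Q = j P * f := by
      rw [hfPQ, ← mul_assoc, mul_inv_cancel₀ hjP, one_mul]
    choose S hS using fun i => mul_iota_split hA hact P (aa i)
    have e1 : ∀ i ∈ Finset.range n, j P * (j (ι (aa i)) * (j δ)⁻¹ * j (ι (bb i)))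
        = j (S i * ι (bb i)) + j (ι (act P (aa i))) * (j δ)⁻¹ * j (ι (bb i)) := by
      intro i _
      calc j P * (j (ι (aa i)) * (j δ)⁻¹ * j (ι (bb i)))
          = j (P * ι (aa i)) * (j δ)⁻¹ * j (ι (bb i)) := by
            rw [← mul_assoc, ← mul_assoc, ← map_mul]
        _ = (j (S i) * j δ + j (ι (act P (aa i)))) * (j δ)⁻¹ * j (ι (bb i)) := by
            rw [hS i, map_add, map_mul]
        _ = j (S i * ι (bb i)) + j (ι (act P (aa i))) * (j δ)⁻¹ * j (ι (bb i)) := by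
            rw [add_mul, add_mul, mul_assoc (j (S i)) (j δ) ((j δ)⁻¹),
              mul_inv_cancel₀ hδ, mul_one, ← map_mul]
    have e0 : j P * f = j (P * ι a + ∑ i ∈ Finset.range n, S i * ι (bb i))
        + ∑ i ∈ Finset.range n, j (ι (act P (aa i))) * (j δ)⁻¹ * j (ι (bb i)) := by
      calc j P * f
          = j P * j (ι a) + ∑ i ∈ Finset.range n,
              j P * (j (ι (aa i)) * (j δ)⁻¹ * j (ι (bb i))) := by
            rw [hf, mul_add, Finset.mul_sum]
        _ = j (P * ι a) + ∑ i ∈ Finset.range n, (j (S i * ι (bb i))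
              + j (ι (act P (aa i))) * (j δ)⁻¹ * j (ι (bb i))) := by
            rw [map_mul, Finset.sum_congr rfl e1]
        _ = j (P * ι a + ∑ i ∈ Finset.range n, S i * ι (bb i))
              + ∑ i ∈ Finset.range n,
                  j (ι (act P (aa i))) * (j δ)⁻¹ * j (ι (bb i)) := by
            rw [Finset.sum_add_distrib, map_add, map_sum, add_assoc]
    have hsing : ∑ i ∈ Finset.range n, j (ι (act P (aa i))) * (j δ)⁻¹ * j (ι (bb i))
        = j (Q - (P * ι a + ∑ i ∈ Finset.range n, S i * ι (bb i))) := by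
      rw [map_sub]
      refine eq_sub_of_add_eq' ?_
      rw [← e0, ← hQf]
    have haa0 : ∀ i ∈ Finset.range n, act P (aa i) = 0 :=
      no_singular_part hd hA hK n (Finset.range n) (fun i => act P (aa i)) bb _
        (Finset.card_range n) hbbindep hsing
    -- the zero set of `P` is a submodule over the constants
    have hact_zero : act P 0 = 0 := by
      have h7 := act_add_arg hA hd hact P 0 0
      rw [add_zero] at h7
      exact (left_eq_add.mp h7)
    ext y
    simp only [Set.mem_setOf_eq, SetLike.mem_coe]
    constructor
    · intro hy
      -- `y, aa 0, …, aa (n-1)` are `n+1` solutions of `P`, of degree `n`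
      have hYsol : ∀ i : Fin (n + 1),
          act P ((Fin.cons y (fun i : Fin n => aa i) : Fin (n + 1) → F) i) = 0 := by
        intro i
        refine Fin.cases ?_ ?_ i
        · rw [Fin.cons_zero]; exact hy
        · intro i'
          rw [Fin.cons_succ]
          exact haa0 i' (Finset.mem_range.2 i'.isLt)
      obtain ⟨γ, hγc, hγs, i₀, hγ0⟩ :=
        solutions_dependent hd hA hact n P hPdeg _ hYsol
      rw [Fin.sum_univ_succ, Fin.cons_zero] at hγs
      have hγs' : γ 0 * y + ∑ i : Fin n, γ i.succ * aa i = 0 := by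
        have e : ∑ i : Fin n, γ i.succ
              * (Fin.cons y (fun i : Fin n => aa i) : Fin (n + 1) → F) i.succ
            = ∑ i : Fin n, γ i.succ * aa i :=
          Finset.sum_congr rfl fun i _ => by rw [Fin.cons_succ]
        rw [← e]
        exact hγs
      by_cases hγz : γ 0 = 0
      · exfalso
        have hs2 : ∑ i : Fin n, γ i.succ * aa i = 0 := by
          rw [hγz, zero_mul, zero_add] at hγs'
          exact hγs'
        have hconv : ∑ i ∈ Finset.range n,
            (fun i => if h : i < n then γ (⟨i, h⟩ : Fin n).succ else 0) i * aa i = 0 := by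
          rw [← Fin.sum_univ_eq_sum_range
            (fun i => (fun i => if h : i < n then γ (⟨i, h⟩ : Fin n).succ else 0) i * aa i) n]
          have e2 : ∑ i : Fin n,
              (fun i => if h : i < n then γ (⟨i, h⟩ : Fin n).succ else 0) (i : ℕ) * aa i
              = ∑ i : Fin n, γ i.succ * aa i :=
            Finset.sum_congr rfl fun i _ => by simp only [dif_pos i.isLt, Fin.eta]
          rw [e2]
          exact hs2
        have hall := haaindep _ (fun i hi => by
          by_cases h : i < n
          · simp only [dif_pos h]
            exact hγc _
          · simp only [dif_neg h]
            exact hd.map_zero') hconv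
        have hzero : ∀ i : Fin (n + 1), γ i = 0 := by
          intro i
          refine Fin.cases hγz ?_ i
          intro i'
          have h8 := hall i' (Finset.mem_range.2 i'.isLt)
          simpa only [dif_pos i'.isLt, Fin.eta] using h8
        exact hγ0 (hzero i₀)
      · have hγs'' : (∑ i : Fin n, γ i.succ * aa i) + γ 0 * y = 0 := by
          rw [add_comm (∑ i : Fin n, γ i.succ * aa (i : ℕ)) (γ 0 * y)]
          exact hγs'
        have h4 : γ 0 * y = -∑ i : Fin n, γ i.succ * aa i :=
          eq_neg_of_add_eq_zero_left hγs'

        have hyval : y = ∑ i : Fin n, (-(γ 0)⁻¹ * γ i.succ) * aa i := by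
          calc y = (γ 0)⁻¹ * (γ 0 * y) := by
                rw [← mul_assoc, inv_mul_cancel₀ hγz, one_mul]
            _ = (γ 0)⁻¹ * -∑ i : Fin n, γ i.succ * aa i := by rw [h4]
            _ = ∑ i : Fin n, (-(γ 0)⁻¹ * γ i.succ) * aa i := by
                rw [mul_neg, Finset.mul_sum, ← Finset.sum_neg_distrib]
                exact Finset.sum_congr rfl fun i _ => by ring
        rw [Submodule.mem_span_range_iff_exists_fun]
        refine ⟨fun i => ⟨-(γ 0)⁻¹ * γ i.succ,
          Subfield.mul_mem _ (Subfield.neg_mem _ (Subfield.inv_mem _ (hγc 0)))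
            (hγc i.succ)⟩, ?_⟩
        rw [hyval]
        rfl
    · intro hy
      let Zmod : Submodule (constants F d hd) F :=
        { carrier := {z : F | act P z = 0}
          add_mem' := fun {x} {z} hx hz => by
            simp only [Set.mem_setOf_eq] at *
            rw [act_add_arg hA hd hact, hx, hz, add_zero]
          zero_mem' := hact_zero
          smul_mem' := fun c x hx => by
            simp only [Set.mem_setOf_eq] at *
            have : act P ((c : F) * x) = (c : F) * act P x :=
              act_const_mul_arg hA hd hact P c.2 x
            show act P ((c : F) * x) = 0
            rw [this, hx, mul_zero] }
      have hle : Submodule.span (constants F d hd)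
          (Set.range fun i : Fin n => aa i) ≤ Zmod := by
        refine Submodule.span_le.2 ?_
        rintro x ⟨i, rfl⟩
        exact haa0 i (Finset.mem_range.2 i.isLt)
      exact hle hy
end

section
/- Suppose F is linearly differentially closed. Then F(∂) = F⟨∂⟩ + F⟨∂^{-1}⟩, i.e., every rational pseudo-differential operator is the sum of a differential operator and an integration operator. -/
open Finset

namespace RPDO
variable {F : Type*} [Field F] {A : Type*} [Ring A]

/-- abbreviation for a differential operator with coefficient list `a` up to degree `n`. -/
def Po (ι : F →+* A) (δ : A) (n : ℕ) (a : ℕ → F) : A :=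
  ∑ i ∈ range (n+1), ι (a i) * δ ^ i

variable (ι : F →+* A) (δ : A)

lemma Po_zero (a : ℕ → F) : Po ι δ 0 a = ι (a 0) := by
  simp [Po]

lemma Po_add (n : ℕ) (a b : ℕ → F) :
    Po ι δ n a + Po ι δ n b = Po ι δ n (fun i => a i + b i) := by
  simp [Po, ← Finset.sum_add_distrib, ← add_mul]

lemma Po_sub (n : ℕ) (a b : ℕ → F) :
    Po ι δ n a - Po ι δ n b = Po ι δ n (fun i => a i - b i) := by
  simp [Po, ← Finset.sum_sub_distrib, ← sub_mul]

lemma Po_pad {m n : ℕ} (h : m ≤ n) (a : ℕ → F) :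
    Po ι δ m a = Po ι δ n (fun i => if i ≤ m then a i else 0) := by
  unfold Po
  rw [← Finset.sum_subset (Finset.range_subset_range.2 (Nat.add_le_add_right h 1))]
  · exact Finset.sum_congr rfl fun i hi => by
      show ι (a i) * δ ^ i = ι (if i ≤ m then a i else 0) * δ ^ i
      rw [if_pos (Nat.lt_succ_iff.mp (mem_range.mp hi))]
  · intro i _ hi
    show ι (if i ≤ m then a i else 0) * δ ^ i = 0
    rw [if_neg (fun hle => hi (mem_range.2 (Nat.lt_succ_of_le hle))), map_zero, zero_mul]

lemma Po_top_zero {n : ℕ} {a : ℕ → F} (h : a (n+1) = 0) :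
    Po ι δ (n+1) a = Po ι δ n a := by
  rw [Po, Finset.sum_range_succ, h, map_zero, zero_mul, add_zero]; rfl

lemma Po_mul_delta (n : ℕ) (a : ℕ → F) :
    Po ι δ n a * δ = Po ι δ (n+1) (fun j => if j = 0 then 0 else a (j-1)) := by
  rw [Po, Po, Finset.sum_range_succ' (fun j => ι (if j = 0 then 0 else a (j-1)) * δ ^ j)]
  simp [Finset.sum_mul, mul_assoc, ← pow_succ]

lemma Po_mul_delta_pow (n : ℕ) (a : ℕ → F) (k : ℕ) :
    ∃ a' : ℕ → F, Po ι δ n a * δ ^ k = Po ι δ (n+k) a' ∧ a' (n+k) = a n := by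
  induction k with
  | zero => exact ⟨a, by simp, rfl⟩
  | succ k ih =>
    obtain ⟨a', h1, h2⟩ := ih
    refine ⟨fun j => if j = 0 then 0 else a' (j-1), ?_, ?_⟩
    · rw [pow_succ, ← mul_assoc, h1, Po_mul_delta, ← Nat.add_assoc]
    · show (if n + (k+1) = 0 then 0 else a' (n + (k+1) - 1)) = a n
      have hne : n + (k+1) ≠ 0 := by omega
      have he : n + (k+1) - 1 = n + k := by omega
      rw [if_neg hne, he, h2]

lemma Po_decomp (n : ℕ) (a : ℕ → F) :
    Po ι δ (n+1) a = ι (a 0) + Po ι δ n (fun i => a (i+1)) * δ := by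
  rw [Po, Finset.sum_range_succ' (fun i => ι (a i) * δ ^ i)]
  rw [Po, Finset.sum_mul]
  simp only [pow_zero, mul_one, mul_assoc, ← pow_succ]
  exact add_comm _ _

lemma ι_eq_Po (c : F) : ι c = Po ι δ 0 (fun _ => c) := by simp [Po]


/-- the finsupp corresponding to a coefficient list -/
noncomputable def mkF (n : ℕ) (a : ℕ → F) : ℕ →₀ F :=
  Finsupp.onFinset (range (n+1)) (fun i => if i ∈ range (n+1) then a i else 0)
    (fun i h => by by_contra hc; exact h (if_neg hc))

lemma Po_eq_finsupp_sum (n : ℕ) (a : ℕ → F) :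
    Po ι δ n a = (mkF n a).sum fun i x => ι x * δ ^ i := by
  unfold mkF
  rw [Finsupp.sum_of_support_subset _ Finsupp.support_onFinset_subset _
    (fun i _ => by rw [map_zero, zero_mul])]
  refine Finset.sum_congr rfl fun i hi => ?_
  rw [Finsupp.onFinset_apply, if_pos hi]

variable {d : F → F}

lemma coeff_zero (hA : IsDiffOpRing d A ι δ) {n : ℕ} {a : ℕ → F}
    (h : Po ι δ n a = 0) : ∀ i ≤ n, a i = 0 := by
  obtain ⟨c, -, hu⟩ := hA.repr 0
  have h1 : mkF n a = c := hu _ (h ▸ (Po_eq_finsupp_sum ι δ n a))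
  have h2 : (0 : ℕ →₀ F) = c := hu _ (by
    show (0 : A) = (0 : ℕ →₀ F).sum fun i x => ι x * δ ^ i
    rw [Finsupp.sum_zero_index])
  have h3 : mkF n a = 0 := h1.trans h2.symm
  intro i hi
  have := DFunLike.congr_fun h3 i
  unfold mkF at this
  rwa [Finsupp.onFinset_apply, if_pos (mem_range.2 (Nat.lt_succ_of_le hi)),
    Finsupp.coe_zero, Pi.zero_apply] at this

lemma exists_Po (hA : IsDiffOpRing d A ι δ) (Q : A) : ∃ N q, Q = Po ι δ N q := by
  obtain ⟨c, hc, -⟩ := hA.repr Q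
  obtain ⟨N, hN⟩ := c.support.exists_nat_subset_range
  refine ⟨N, c, ?_⟩
  rw [hc, Po, Finsupp.sum_of_support_subset _
    (hN.trans (Finset.range_subset_range.2 (Nat.le_succ N))) _
    (fun i _ => by rw [map_zero, zero_mul])]

lemma hasDeg_of_ne_zero (hA : IsDiffOpRing d A ι δ) {Q : A} (hQ : Q ≠ 0) :
    ∃ n, HasDeg ι δ Q n := by
  obtain ⟨c, hc, -⟩ := hA.repr Q
  have hcne : c ≠ 0 := by
    rintro rfl
    exact hQ (by rw [hc, Finsupp.sum_zero_index])
  have hsupp : c.support.Nonempty := Finsupp.support_nonempty_iff.2 hcne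
  refine ⟨c.support.max' hsupp, c, ?_, ?_⟩
  · exact Finsupp.mem_support_iff.1 (c.support.max'_mem hsupp)
  · rw [hc, Finsupp.sum_of_support_subset (s := range (c.support.max' hsupp + 1)) _
      (fun i hi => mem_range.2 (Nat.lt_succ_of_le (c.support.le_max' i hi))) _
      (fun i _ => by rw [map_zero, zero_mul])]

lemma ne_zero_of_hasDeg (hA : IsDiffOpRing d A ι δ) {Q : A} {n : ℕ}
    (h : HasDeg ι δ Q n) : Q ≠ 0 := by
  obtain ⟨a, han, hQ⟩ := h
  rintro rfl
  exact han (coeff_zero ι δ hA hQ.symm n le_rfl)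

lemma hasDeg_le (hA : IsDiffOpRing d A ι δ) {Q : A} {m : ℕ} {b : ℕ → F}
    (hQ : Q = Po ι δ m b) (hne : Q ≠ 0) : ∃ n ≤ m, HasDeg ι δ Q n := by
  obtain ⟨n, a, han, hQn⟩ := hasDeg_of_ne_zero ι δ hA hne
  have hQn' : Q = Po ι δ n a := hQn
  refine ⟨n, ?_, a, han, hQn⟩
  by_contra hmn
  push_neg at hmn
  have hpad : Q = Po ι δ n (fun i => if i ≤ m then b i else 0) := by
    rw [hQ, Po_pad ι δ (le_of_lt hmn)]
  have hz : Po ι δ n (fun i => a i - (if i ≤ m then b i else 0)) = 0 := by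
    rw [← Po_sub, ← hQn', ← hpad, sub_self]
  have := coeff_zero ι δ hA hz n le_rfl
  simp only [if_neg (not_le.2 hmn), sub_zero] at this
  exact han this

lemma delta_ne_zero (hA : IsDiffOpRing d A ι δ) : δ ≠ 0 := by
  intro h0
  have hδ : δ = Po ι δ 1 (fun i => if i = 1 then 1 else 0) := by
    simp [Po, Finset.sum_range_succ]
  have hz : Po ι δ 1 (fun i => if i = 1 then 1 else 0) = 0 := hδ.symm.trans h0
  have := coeff_zero ι δ hA hz 1 le_rfl
  simp at this

lemma ι_ne_zero (hA : IsDiffOpRing d A ι δ) {y : F} (hy : y ≠ 0) : ι y ≠ 0 := by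
  intro h0
  have hz : Po ι δ 0 (fun _ => y) = 0 := (ι_eq_Po ι δ y).symm.trans h0
  exact hy (coeff_zero ι δ hA hz 0 le_rfl)

lemma PM (hA : IsDiffOpRing d A ι δ) (n : ℕ) (a : ℕ → F) (c : F) :
    ∃ g : ℕ → F, Po ι δ n a * ι c = Po ι δ n g ∧ g n = a n * c := by
  induction n generalizing a c with
  | zero =>
    refine ⟨fun _ => a 0 * c, ?_, rfl⟩
    rw [Po_zero, Po_zero, ← map_mul]
  | succ n ih =>
    obtain ⟨g₁, hg₁, hg₁top⟩ := ih (fun i => a (i+1)) c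
    obtain ⟨g₂, hg₂, -⟩ := ih (fun i => a (i+1)) (d c)
    have key : Po ι δ (n+1) a * ι c
        = ι (a 0 * c) + Po ι δ n g₁ * δ + Po ι δ n g₂ := by
      calc Po ι δ (n+1) a * ι c
          = ι (a 0) * ι c + Po ι δ n (fun i => a (i+1)) * (δ * ι c) := by
            rw [Po_decomp, add_mul, mul_assoc]
        _ = ι (a 0 * c) + ((Po ι δ n (fun i => a (i+1)) * ι c) * δ
              + Po ι δ n (fun i => a (i+1)) * ι (d c)) := by
            rw [hA.comm c, mul_add, ← mul_assoc, ← map_mul]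
        _ = ι (a 0 * c) + Po ι δ n g₁ * δ + Po ι δ n g₂ := by
            rw [hg₁, hg₂, add_assoc]
    have e0 : ι (a 0 * c) = Po ι δ (n+1) (fun i => if i ≤ 0 then a 0 * c else 0) := by
      rw [ι_eq_Po ι δ (a 0 * c)]
      exact Po_pad ι δ (Nat.zero_le (n+1)) _
    have e1 : Po ι δ n g₁ * δ = Po ι δ (n+1) (fun j => if j = 0 then 0 else g₁ (j-1)) :=
      Po_mul_delta ι δ n g₁
    have e2 : Po ι δ n g₂ = Po ι δ (n+1) (fun i => if i ≤ n then g₂ i else 0) :=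
      Po_pad ι δ (Nat.le_succ n) _
    refine ⟨fun i => ((if i ≤ 0 then a 0 * c else 0) + (if i = 0 then 0 else g₁ (i-1)))
      + (if i ≤ n then g₂ i else 0), ?_, ?_⟩
    · rw [key, e0, e1, e2, Po_add, Po_add]
    · simp only [Nat.succ_ne_zero, if_neg (by omega : ¬ n + 1 ≤ 0),
        if_neg (Nat.succ_ne_zero n), if_neg (by omega : ¬ n + 1 ≤ n),
        Nat.add_sub_cancel, zero_add, add_zero]
      exact hg₁top

lemma EV (hd : IsDerivation d) (hA : IsDiffOpRing d A ι δ) (n : ℕ) (a : ℕ → F) (c : F) :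
    ∃ b : ℕ → F, Po ι δ n a * ι c
      = ι (∑ i ∈ range (n+1), a i * d^[i] c) + (∑ j ∈ range n, ι (b j) * δ ^ j) * δ := by
  induction n generalizing a c with
  | zero =>
    refine ⟨fun _ => 0, ?_⟩
    simp [Po_zero, ← map_mul]
  | succ n ih =>
    obtain ⟨b₁, hb₁⟩ := ih (fun i => a (i+1)) c
    obtain ⟨b₂, hb₂⟩ := ih (fun i => a (i+1)) (d c)
    set P := Po ι δ n (fun i => a (i+1)) with hP
    set E₁ := ∑ i ∈ range (n+1), a (i+1) * d^[i] c with hE₁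
    set E₂ := ∑ i ∈ range (n+1), a (i+1) * d^[i] (d c) with hE₂
    set R₁ := ∑ j ∈ range n, ι (b₁ j) * δ ^ j with hR₁
    set R₂ := ∑ j ∈ range n, ι (b₂ j) * δ ^ j with hR₂
    have key : Po ι δ (n+1) a * ι c
        = ι (a 0 * c + E₂) + (ι E₁ + R₁ * δ + R₂) * δ := by
      calc Po ι δ (n+1) a * ι c
          = ι (a 0) * ι c + P * (δ * ι c) := by rw [Po_decomp, add_mul, mul_assoc]
        _ = ι (a 0 * c) + ((P * ι c) * δ + P * ι (d c)) := by
            rw [hA.comm c, mul_add, ← mul_assoc, ← map_mul]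
        _ = ι (a 0 * c) + ((ι E₁ + R₁ * δ) * δ + (ι E₂ + R₂ * δ)) := by rw [hb₁, hb₂]
        _ = ι (a 0 * c + E₂) + (ι E₁ + R₁ * δ + R₂) * δ := by
            rw [map_add]
            noncomm_ring
    have hconst : a 0 * c + E₂ = ∑ i ∈ range (n+2), a i * d^[i] c := by
      rw [Finset.sum_range_succ' (fun i => a i * d^[i] c) (n+1), hE₂]
      simp only [Function.iterate_succ_apply, Function.iterate_zero_apply]
      exact add_comm _ _
    have hrem : ι E₁ + R₁ * δ + R₂
        = ∑ j ∈ range (n+1), ι ((if j = 0 then E₁ else b₁ (j-1)) + (if j < n then b₂ j else 0)) * δ ^ j := by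
      have hsplit : ∀ j, ι ((if j = 0 then E₁ else b₁ (j-1)) + (if j < n then b₂ j else 0)) * δ ^ j
          = ι (if j = 0 then E₁ else b₁ (j-1)) * δ ^ j + ι (if j < n then b₂ j else 0) * δ ^ j := by
        intro j; rw [map_add, add_mul]
      rw [Finset.sum_congr rfl fun j _ => hsplit j, Finset.sum_add_distrib]
      congr 1
      · rw [Finset.sum_range_succ' (fun j => ι (if j = 0 then E₁ else b₁ (j-1)) * δ ^ j) n]
        simp only [if_pos rfl, if_neg (Nat.succ_ne_zero _), Nat.add_sub_cancel, pow_zero, mul_one]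
        rw [add_comm, hR₁, Finset.sum_mul]
        congr 1
        exact Finset.sum_congr rfl fun j _ => by rw [mul_assoc, ← pow_succ]
      · rw [Finset.sum_range_succ, if_neg (lt_irrefl n), map_zero, zero_mul, add_zero, hR₂]
        exact Finset.sum_congr rfl fun j hj => by rw [if_pos (mem_range.mp hj)]
    refine ⟨fun j => (if j = 0 then E₁ else b₁ (j-1)) + (if j < n then b₂ j else 0), ?_⟩
    rw [key, hconst, hrem]

lemma LD (hA : IsDiffOpRing d A ι δ) {P : A} {n : ℕ} (hn : 1 ≤ n) (a : ℕ → F)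
    (han : a n ≠ 0) (hP : P = Po ι δ n a) (N : ℕ) (q : ℕ → F) :
    ∃ S : A, ∃ r : ℕ → F, Po ι δ N q = P * S + Po ι δ (n-1) r := by
  induction N using Nat.strong_induction_on generalizing q with
  | _ N ih =>
    by_cases hN : N ≤ n - 1
    · exact ⟨0, fun i => if i ≤ N then q i else 0,
        by rw [mul_zero, zero_add]; exact Po_pad ι δ hN q⟩
    · have hnN : n ≤ N := by omega
      set c := (a n)⁻¹ * q N with hc
      obtain ⟨g, hg, hgtop⟩ := PM ι δ hA n a c
      obtain ⟨g', hg', hg'top⟩ := Po_mul_delta_pow ι δ n g (N - n)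
      have hNn : n + (N - n) = N := by omega
      rw [hNn] at hg' hg'top
      have htop : g' N = q N := by
        rw [hg'top, hgtop, hc, ← mul_assoc, mul_inv_cancel₀ han, one_mul]
      obtain ⟨M, rfl⟩ : ∃ M, N = M + 1 := ⟨N - 1, by omega⟩
      have hsplit : Po ι δ (M+1) q
          = P * (ι c * δ ^ (M+1-n)) + Po ι δ M (fun i => q i - g' i) := by
        have h1 : P * (ι c * δ ^ (M+1-n)) = Po ι δ (M+1) g' := by
          rw [← mul_assoc, hP, hg, hg']
        have h2 : Po ι δ (M+1) (fun i => q i - g' i) = Po ι δ M (fun i => q i - g' i) := by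
          apply Po_top_zero
          show q (M+1) - g' (M+1) = 0
          rw [htop, sub_self]
        rw [h1, ← h2, ← Po_sub]
        abel
      obtain ⟨S', r, hS'⟩ := ih M (by omega) (fun i => q i - g' i)
      exact ⟨ι c * δ ^ (M+1-n) + S', r, by rw [hsplit, hS', mul_add, add_assoc]⟩

lemma d_inv (hd : IsDerivation d) {y : F} (hy : y ≠ 0) :
    d y⁻¹ = -(y⁻¹ * (d y / y)) := by
  have h := hd.leibniz y y⁻¹
  rw [mul_inv_cancel₀ hy, hd.map_one'] at h
  have h2 : y * d y⁻¹ = -(d y * y⁻¹) := by linear_combination -h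
  have h3 : d y⁻¹ = y⁻¹ * (y * d y⁻¹) := by rw [← mul_assoc, inv_mul_cancel₀ hy, one_mul]
  rw [h3, h2, div_eq_mul_inv]
  ring

lemma FACT (hd : IsDerivation d) (hA : IsDiffOpRing d A ι δ) {n : ℕ} (hn : 1 ≤ n)
    (a : ℕ → F) {y : F} (hy : y ≠ 0)
    (hzero : ∑ i ∈ range (n+1), a i * d^[i] y = 0) :
    ∃ b : ℕ → F, Po ι δ n a = Po ι δ (n-1) b * (δ - ι (d y / y)) := by
  obtain ⟨b₁, hb₁⟩ := EV ι δ hd hA n a y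
  rw [hzero, map_zero, zero_add] at hb₁
  obtain ⟨m, rfl⟩ : ∃ m, n = m + 1 := ⟨n - 1, by omega⟩
  have hR : (∑ j ∈ range (m+1), ι (b₁ j) * δ ^ j) = Po ι δ m b₁ := rfl
  rw [hR] at hb₁
  have hinv : ι y * ι y⁻¹ = 1 := by rw [← map_mul, mul_inv_cancel₀ hy, map_one]
  have step : Po ι δ (m+1) a = Po ι δ m b₁ * (δ * ι y⁻¹) := by
    calc Po ι δ (m+1) a = Po ι δ (m+1) a * (ι y * ι y⁻¹) := by rw [hinv, mul_one]
      _ = (Po ι δ (m+1) a * ι y) * ι y⁻¹ := by rw [mul_assoc]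
      _ = (Po ι δ m b₁ * δ) * ι y⁻¹ := by rw [hb₁]
      _ = Po ι δ m b₁ * (δ * ι y⁻¹) := by rw [mul_assoc]
  obtain ⟨b, hb, -⟩ := PM ι δ hA m b₁ y⁻¹
  refine ⟨b, ?_⟩
  have hcomm : δ * ι y⁻¹ = ι y⁻¹ * δ + ι (d y⁻¹) := hA.comm y⁻¹
  have hdinv : ι (d y⁻¹) = - ι (y⁻¹ * (d y / y)) := by rw [d_inv hd hy, map_neg]
  calc Po ι δ (m+1) a = Po ι δ m b₁ * (δ * ι y⁻¹) := step
    _ = Po ι δ m b₁ * (ι y⁻¹ * δ - ι (y⁻¹ * (d y / y))) := by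
        rw [hcomm, hdinv, ← sub_eq_add_neg]
    _ = Po ι δ m b₁ * (ι y⁻¹ * (δ - ι (d y / y))) := by
        congr 1
        rw [map_mul, mul_sub]
    _ = (Po ι δ m b₁ * ι y⁻¹) * (δ - ι (d y / y)) := by rw [mul_assoc]
    _ = Po ι δ (m+1-1) b * (δ - ι (d y / y)) := by rw [hb]; norm_num

section K
variable {K : Type*} [DivisionRing K] (j : A →+* K)

lemma jι_mem (y : F) : j (ι y) ∈ Subring.closure (Set.range (j.comp ι) ∪ {(j δ)⁻¹}) :=
  Subring.subset_closure (Or.inl ⟨y, rfl⟩)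

lemma jδinv_mem : (j δ)⁻¹ ∈ Subring.closure (Set.range (j.comp ι) ∪ {(j δ)⁻¹}) :=
  Subring.subset_closure (Or.inr rfl)

lemma jι_inv {y : F} (hy : y ≠ 0) : (j (ι y))⁻¹ = j (ι y⁻¹) := by
  symm
  exact eq_inv_of_mul_eq_one_left
    (by rw [← map_mul, ← map_mul, inv_mul_cancel₀ hy, map_one, map_one])

lemma int_op (hA : IsDiffOpRing d A ι δ) (hδ : j δ ≠ 0) (D : A) :
    ∃ E : A, ∃ I ∈ Subring.closure (Set.range (j.comp ι) ∪ {(j δ)⁻¹}),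
      (j δ)⁻¹ * j D = j E + I := by
  have mono : ∀ (i : ℕ) (a : F), ∃ E : A,
      ∃ I ∈ Subring.closure (Set.range (j.comp ι) ∪ {(j δ)⁻¹}),
      (j δ)⁻¹ * j (ι a * δ ^ i) = j E + I := by
    intro i
    induction i with
    | zero =>
      intro a
      refine ⟨0, (j δ)⁻¹ * j (ι a), mul_mem (jδinv_mem ι δ j) (jι_mem ι δ j a), ?_⟩
      rw [map_zero, zero_add, pow_zero, mul_one]
    | succ i ih =>
      intro a
      obtain ⟨E', I', hI', hEI⟩ := ih (d a)
      have hcomm' : ι a * δ = δ * ι a - ι (d a) := eq_sub_of_add_eq (hA.comm a).symm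
      have key : ι a * δ ^ (i+1) = δ * (ι a * δ ^ i) - ι (d a) * δ ^ i := by
        rw [pow_succ', ← mul_assoc, hcomm', sub_mul, mul_assoc]
      refine ⟨ι a * δ ^ i - E', -I', neg_mem hI', ?_⟩
      calc (j δ)⁻¹ * j (ι a * δ ^ (i+1))
          = (j δ)⁻¹ * (j δ * j (ι a * δ ^ i)) - (j δ)⁻¹ * j (ι (d a) * δ ^ i) := by
            rw [key, map_sub, map_mul, mul_sub]
        _ = j (ι a * δ ^ i) - (j E' + I') := by
            rw [← mul_assoc, inv_mul_cancel₀ hδ, one_mul, hEI]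
        _ = j (ι a * δ ^ i - E') + -I' := by rw [map_sub]; abel
  obtain ⟨N, q, hQ⟩ := exists_Po ι δ hA D
  rw [hQ]
  show ∃ E : A, ∃ I ∈ Subring.closure (Set.range (j.comp ι) ∪ {(j δ)⁻¹}),
      (j δ)⁻¹ * j (∑ i ∈ range (N+1), ι (q i) * δ ^ i) = j E + I
  refine Finset.sum_induction (fun i => ι (q i) * δ ^ i)
    (fun x => ∃ E : A, ∃ I ∈ Subring.closure (Set.range (j.comp ι) ∪ {(j δ)⁻¹}),
      (j δ)⁻¹ * j x = j E + I) ?_ ?_ ?_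
  · rintro x y ⟨E₁, I₁, hI₁, h₁⟩ ⟨E₂, I₂, hI₂, h₂⟩
    refine ⟨E₁ + E₂, I₁ + I₂, add_mem hI₁ hI₂, ?_⟩
    rw [map_add, mul_add, h₁, h₂, map_add]
    abel
  · exact ⟨0, 0, zero_mem _, by simp⟩
  · exact fun i _ => mono i (q i)

lemma main_induction (hd : IsDerivation d) (hldc : LinDiffClosed d)
    (hA : IsDiffOpRing d A ι δ) (hinj : Function.Injective j) :
    ∀ (n : ℕ) (P : A), HasDeg ι δ P n → ∀ Q : A,
      ∃ S : A, ∃ I ∈ Subring.closure (Set.range (j.comp ι) ∪ {(j δ)⁻¹}),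
        (j P)⁻¹ * j Q = j S + I := by
  intro n
  induction n using Nat.strong_induction_on with
  | _ n ih =>
    intro P hP Q
    obtain ⟨a, han, hPa⟩ := hP
    have hPa' : P = Po ι δ n a := hPa
    have hPne : P ≠ 0 := ne_zero_of_hasDeg ι δ hA ⟨a, han, hPa⟩
    have hjP : j P ≠ 0 := fun h => hPne (hinj (by rw [h, map_zero]))
    have hδne : δ ≠ 0 := delta_ne_zero ι δ hA
    have hjδ : j δ ≠ 0 := fun h => hδne (hinj (by rw [h, map_zero]))
    rcases Nat.eq_zero_or_pos n with hn0 | hnpos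
    · subst hn0
      have hP0 : P = ι (a 0) := by rw [hPa', Po_zero]
      have hinv : (j P)⁻¹ = j (ι (a 0)⁻¹) := by
        symm
        exact eq_inv_of_mul_eq_one_left
          (by rw [hP0, ← map_mul, ← map_mul, inv_mul_cancel₀ han, map_one, map_one])
      exact ⟨ι (a 0)⁻¹ * Q, 0, zero_mem _, by rw [hinv, ← map_mul, add_zero]⟩
    · obtain ⟨N, q, hQ⟩ := exists_Po ι δ hA Q
      obtain ⟨S₀, r, hdiv⟩ := LD ι δ hA hnpos a han hPa' N q
      set R := Po ι δ (n-1) r with hR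
      have hQPR : Q = P * S₀ + R := by rw [hQ, hdiv]
      have hsplit : (j P)⁻¹ * j Q = j S₀ + (j P)⁻¹ * j R := by
        rw [hQPR, map_add, map_mul, mul_add, ← mul_assoc, inv_mul_cancel₀ hjP, one_mul]
      obtain ⟨y, hy, hyz⟩ := hldc n a hnpos han
      have hyz' : ∑ i ∈ range (n+1), a i * d^[i] y = 0 := hyz
      obtain ⟨b, hfact⟩ := FACT ι δ hd hA hnpos a hy hyz'
      set u := d y / y with hu
      set P₁ := Po ι δ (n-1) b with hP₁
      set W : A := δ - ι u with hW
      have hPfact : P = P₁ * W := by rw [hPa', hfact]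
      have hP₁ne : P₁ ≠ 0 := fun h => hPne (by rw [hPfact, h, zero_mul])
      have hjP₁ : j P₁ ≠ 0 := fun h => hP₁ne (hinj (by rw [h, map_zero]))
      obtain ⟨m, hmle, hdegP₁⟩ := hasDeg_le ι δ hA hP₁ hP₁ne
      obtain ⟨S₁, I₁, hI₁, hmain₁⟩ := ih m (by omega) P₁ hdegP₁ R
      have hWconj : W = ι y * δ * ι y⁻¹ := by
        have hcomm : δ * ι y⁻¹ = ι y⁻¹ * δ + ι (d y⁻¹) := hA.comm y⁻¹
        have hval : y * d y⁻¹ = -u := by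
          rw [d_inv hd hy, hu]
          field_simp
        rw [hW, mul_assoc, hcomm, mul_add, ← mul_assoc, ← map_mul,
          mul_inv_cancel₀ hy, map_one, one_mul, ← map_mul, hval, map_neg,
          ← sub_eq_add_neg]
      have hjιy : j (ι y) ≠ 0 := fun h => ι_ne_zero ι δ hA hy (hinj (by rw [h, map_zero]))
      have hjιyinv : j (ι y⁻¹) ≠ 0 :=
        fun h => ι_ne_zero ι δ hA (inv_ne_zero hy) (hinj (by rw [h, map_zero]))
      have hWinv : (j W)⁻¹ = j (ι y) * (j δ)⁻¹ * j (ι y⁻¹) := by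
        rw [hWconj, map_mul, map_mul, mul_inv_rev, mul_inv_rev,
          jι_inv ι j (inv_ne_zero hy), inv_inv, jι_inv ι j hy, mul_assoc]
      have hWinvC : (j W)⁻¹ ∈ Subring.closure (Set.range (j.comp ι) ∪ {(j δ)⁻¹}) := by
        rw [hWinv]
        exact mul_mem (mul_mem (jι_mem ι δ j y) (jδinv_mem ι δ j)) (jι_mem ι δ j y⁻¹)
      obtain ⟨E, I₂, hI₂, hE⟩ := int_op ι δ j hA hjδ (ι y⁻¹ * S₁)
      have hstep : (j W)⁻¹ * j S₁ = j (ι y * E) + j (ι y) * I₂ := by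
        calc (j W)⁻¹ * j S₁ = j (ι y) * ((j δ)⁻¹ * (j (ι y⁻¹) * j S₁)) := by
              rw [hWinv, mul_assoc, mul_assoc]
          _ = j (ι y) * ((j δ)⁻¹ * j (ι y⁻¹ * S₁)) := by rw [← map_mul]
          _ = j (ι y) * (j E + I₂) := by rw [hE]
          _ = j (ι y * E) + j (ι y) * I₂ := by rw [mul_add, ← map_mul]
      refine ⟨S₀ + ι y * E, j (ι y) * I₂ + (j W)⁻¹ * I₁,
        add_mem (mul_mem (jι_mem ι δ j y) hI₂) (mul_mem hWinvC hI₁), ?_⟩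
      have hfinal : (j P)⁻¹ * j R = (j W)⁻¹ * (j S₁ + I₁) := by
        rw [hPfact, map_mul, mul_inv_rev, mul_assoc, hmain₁]
      rw [hsplit, hfinal, mul_add, hstep, map_add]
      abel

end K
end RPDO

/-- If `F` is linearly differentially closed, then
`F(∂) = F⟨∂⟩ + F⟨∂⁻¹⟩`: every rational pseudo-differential operator is the sum of a
differential operator and an integration operator (an element of the subring of `F(∂)`
generated by `F` and `∂⁻¹`). -/
theorem ratPseudoDiffOp_decomposition {F : Type*} [Field F] [CharZero F]
    (d : F → F) (hd : IsDerivation d)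
    (halg : IsAlgClosed (constants F d hd))
    (hne : constants F d hd ≠ ⊤)
    (hldc : LinDiffClosed d)
    {A : Type*} [Ring A] (ι : F →+* A) (δ : A) (hA : IsDiffOpRing d A ι δ)
    {K : Type*} [DivisionRing K] (j : A →+* K) (hK : IsQuotientDivisionRing A K j) :
    ∀ f : K, ∃ P : A,
      ∃ I ∈ Subring.closure (Set.range (j.comp ι) ∪ {(j δ)⁻¹}), f = j P + I := by
  intro f
  obtain ⟨P, Q, hPne, hf⟩ := hK.quot f
  obtain ⟨n, hdeg⟩ := RPDO.hasDeg_of_ne_zero ι δ hA hPne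
  obtain ⟨S, I, hI, hSI⟩ := RPDO.main_induction ι δ j hd hldc hA hK.inj n P hdeg Q
  exact ⟨S, I, hI, by rw [hf, hSI]⟩
end

section
/- The only valuation subring of F(∂) containing F that is different from F(∂) itself is F(∂)_{≤0}, the set of rational pseudo-differential operators of nonpositive order. Equivalently, if R is a valuation subring of F(∂) with F ⊂ R and R ≠ F(∂), then R = F(∂)_{≤0}. -/
open Finset

section Statement13Aux

variable {F : Type*} [Field F]

/-- Commutation coefficients: `δ^i * ι y = ∑_{k ≤ i} ι (ccAux d y i k) * δ^k`. -/
def ccAux (d : F → F) (y : F) : ℕ → ℕ → F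
  | 0, 0 => y
  | 0, _+1 => 0
  | i+1, 0 => d (ccAux d y i 0)
  | i+1, k+1 => ccAux d y i k + d (ccAux d y i (k+1))

variable {d : F → F}

theorem ccAux_zero_of_lt (hd : IsDerivation d) (y : F) :
    ∀ i k, i < k → ccAux d y i k = 0 := by
  intro i
  induction i with
  | zero =>
    intro k hk
    match k, hk with
    | (k+1), _ => rfl
  | succ i ih =>
    intro k hk
    match k, hk with
    | (k+1), hk =>
      show ccAux d y i k + d (ccAux d y i (k+1)) = 0
      rw [ih k (by omega), ih (k+1) (by omega), hd.map_zero', add_zero]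

theorem ccAux_diag (hd : IsDerivation d) (y : F) : ∀ i, ccAux d y i i = y := by
  intro i
  induction i with
  | zero => rfl
  | succ i ih =>
    show ccAux d y i i + d (ccAux d y i (i+1)) = y
    rw [ih, ccAux_zero_of_lt hd y i (i+1) (by omega), hd.map_zero', add_zero]

theorem ccAux_subdiag (hd : IsDerivation d) (y : F) :
    ∀ i, ccAux d y (i+1) i = ((i+1 : ℕ) : F) * d y := by
  intro i
  induction i with
  | zero =>
    show d (ccAux d y 0 0) = ((1:ℕ) : F) * d y
    show d y = ((1:ℕ) : F) * d y
    rw [Nat.cast_one, one_mul]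
  | succ i ih =>
    show ccAux d y (i+1) i + d (ccAux d y (i+1) (i+1)) = _
    rw [ih, ccAux_diag hd]
    push_cast
    ring

theorem ccAux_d (hd : IsDerivation d) (y : F) :
    ∀ i k, ccAux d (d y) i k = d (ccAux d y i k) := by
  intro i
  induction i with
  | zero =>
    intro k
    match k with
    | 0 => rfl
    | (k+1) => show (0:F) = d 0; rw [hd.map_zero']
  | succ i ih =>
    intro k
    match k with
    | 0 => show d (ccAux d (d y) i 0) = d (d (ccAux d y i 0)); rw [ih]
    | (k+1) =>
      show ccAux d (d y) i k + d (ccAux d (d y) i (k+1))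
          = d (ccAux d y i k + d (ccAux d y i (k+1)))
      rw [hd.map_add, ih, ih]

variable {A : Type*} [Ring A] {ι : F →+* A} {δ : A}

theorem pow_mul_iota (hd : IsDerivation d) (hA : IsDiffOpRing d A ι δ) :
    ∀ (i : ℕ) (y : F), δ ^ i * ι y = ∑ k ∈ Finset.range (i+1), ι (ccAux d y i k) * δ ^ k := by
  intro i
  induction i with
  | zero =>
    intro y
    rw [Finset.sum_range_one, pow_zero, one_mul, mul_one]
    rfl
  | succ i ih =>
    intro y
    have h1 : δ ^ (i+1) * ι y = (δ ^ i * ι y) * δ + δ ^ i * ι (d y) := by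
      rw [pow_succ, mul_assoc, hA.comm y, mul_add, ← mul_assoc]
    rw [h1, ih y, ih (d y), Finset.sum_mul,
      Finset.sum_range_succ' (fun k => ι (ccAux d y (i+1) k) * δ ^ k) (i+1)]
    have hcc : ∀ k, ccAux d y (i+1) (k+1) = ccAux d y i k + d (ccAux d y i (k+1)) :=
      fun k => rfl
    have hcc0 : ccAux d y (i+1) 0 = d (ccAux d y i 0) := rfl
    simp only [hcc, hcc0, map_add, add_mul, Finset.sum_add_distrib]
    simp only [mul_assoc, ← pow_succ]
    have hsimp : ∀ k, ccAux d (d y) i k = d (ccAux d y i k) := ccAux_d hd y i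
    simp only [hsimp]
    rw [add_assoc]
    congr 1
    have e1 : ∑ k ∈ Finset.range (i+1+1), ι (d (ccAux d y i k)) * δ ^ k
        = (∑ x ∈ Finset.range (i+1), ι (d (ccAux d y i (x+1))) * δ ^ (x+1))
          + ι (d (ccAux d y i 0)) * δ ^ 0 :=
      Finset.sum_range_succ' _ (i+1)
    have e2 : ∑ k ∈ Finset.range (i+1+1), ι (d (ccAux d y i k)) * δ ^ k
        = ∑ k ∈ Finset.range (i+1), ι (d (ccAux d y i k)) * δ ^ k := by
      rw [Finset.sum_range_succ, ccAux_zero_of_lt hd y i (i+1) (by omega), hd.map_zero',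
        map_zero, zero_mul, add_zero]
    rw [← e1, e2]

theorem repr_unique (hA : IsDiffOpRing d A ι δ) {P : A} {c₁ c₂ : ℕ →₀ F}
    (h₁ : P = c₁.sum fun i x => ι x * δ ^ i) (h₂ : P = c₂.sum fun i x => ι x * δ ^ i) :
    c₁ = c₂ := by
  obtain ⟨c, -, hu⟩ := hA.repr P
  rw [hu c₁ h₁, hu c₂ h₂]

theorem sum_range_eq_finsupp (a : ℕ → F) (n : ℕ) :
    ∃ c : ℕ →₀ F, (∀ i, c i = if i ≤ n then a i else 0) ∧
      ∑ i ∈ Finset.range (n+1), ι (a i) * δ ^ i = c.sum fun i x => ι x * δ ^ i := by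
  refine ⟨Finsupp.onFinset (Finset.range (n+1)) (fun i => if i ≤ n then a i else 0)
    (fun i hi => ?_), fun i => rfl, ?_⟩
  · rcases le_or_gt i n with h | h
    · exact Finset.mem_range.mpr (by omega)
    · exfalso
      apply hi
      show (if i ≤ n then a i else 0) = 0
      rw [if_neg (by omega)]
  · rw [Finsupp.sum_of_support_subset _ Finsupp.support_onFinset_subset _
      (by intro i _; rw [map_zero, zero_mul])]
    refine Finset.sum_congr rfl fun i hi => ?_
    have : i ≤ n := Nat.lt_succ_iff.mp (Finset.mem_range.mp hi)
    rw [Finsupp.onFinset_apply, if_pos this]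

theorem hasDeg_ne_zero (hA : IsDiffOpRing d A ι δ) {P : A} {n : ℕ}
    (h : HasDeg ι δ P n) : P ≠ 0 := by
  obtain ⟨a, han, hrep⟩ := h
  obtain ⟨c, hc, hsum⟩ := sum_range_eq_finsupp (ι := ι) (δ := δ) a n
  intro h0
  have hz : P = (0 : ℕ →₀ F).sum fun i x => ι x * δ ^ i := by
    rw [h0, Finsupp.sum_zero_index]
  have hc0 : c = 0 := repr_unique hA (hrep.trans hsum) hz
  have : c n = 0 := by rw [hc0]; rfl
  rw [hc n, if_pos le_rfl] at this
  exact han this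

theorem hasDeg_le (hA : IsDiffOpRing d A ι δ) {P : A} {n m : ℕ}
    (h₁ : HasDeg ι δ P n) (h₂ : HasDeg ι δ P m) : n ≤ m := by
  obtain ⟨a, han, hra⟩ := h₁
  obtain ⟨b, hbm, hrb⟩ := h₂
  obtain ⟨c₁, hc₁, hs₁⟩ := sum_range_eq_finsupp (ι := ι) (δ := δ) a n
  obtain ⟨c₂, hc₂, hs₂⟩ := sum_range_eq_finsupp (ι := ι) (δ := δ) b m
  have hcc : c₁ = c₂ := repr_unique hA (hra.trans hs₁) (hrb.trans hs₂)
  by_contra hlt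
  have h1 : c₁ n = a n := by rw [hc₁, if_pos le_rfl]
  have h2 : c₂ n = 0 := by rw [hc₂, if_neg (by omega)]
  rw [hcc, h2] at h1
  exact han h1.symm

theorem hasDeg_unique (hA : IsDiffOpRing d A ι δ) {P : A} {n m : ℕ}
    (h₁ : HasDeg ι δ P n) (h₂ : HasDeg ι δ P m) : n = m :=
  le_antisymm (hasDeg_le hA h₁ h₂) (hasDeg_le hA h₂ h₁)

theorem deg_of_range_sum (hA : IsDiffOpRing d A ι δ) (r : ℕ → F) (N : ℕ) :
    (∑ i ∈ Finset.range N, ι (r i) * δ ^ i) = 0 ∨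
      ∃ k, k < N ∧ HasDeg ι δ (∑ i ∈ Finset.range N, ι (r i) * δ ^ i) k := by
  match N with
  | 0 => left; rw [Finset.range_zero, Finset.sum_empty]
  | (n+1) =>
    obtain ⟨c, hc, hsum⟩ := sum_range_eq_finsupp (ι := ι) (δ := δ) r n
    by_cases h0 : c = 0
    · left; rw [hsum, h0, Finsupp.sum_zero_index]
    · right
      have hne : c.support.Nonempty := Finsupp.support_nonempty_iff.mpr h0
      have hkmem : c.support.max' hne ∈ c.support := Finset.max'_mem _ hne
      set k := c.support.max' hne with hkdef
      have hck : c k ≠ 0 := Finsupp.mem_support_iff.mp hkmem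
      have hkn : k ≤ n := by
        by_contra h
        rw [hc k, if_neg (by omega)] at hck
        exact hck rfl
      refine ⟨k, by omega, ⟨fun i => c i, hck, ?_⟩⟩
      rw [hsum, Finsupp.sum_of_support_subset _ ?_ _ (by intro i _; rw [map_zero, zero_mul])]
      intro i hi
      exact Finset.mem_range.mpr (Nat.lt_succ_of_le (Finset.le_max' _ i hi))

theorem exists_hasDeg (hA : IsDiffOpRing d A ι δ) {P : A} (hP : P ≠ 0) :
    ∃ n, HasDeg ι δ P n := by
  obtain ⟨c, hc, -⟩ := hA.repr P
  by_cases h0 : c = 0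
  · exact absurd (by rw [hc, h0, Finsupp.sum_zero_index]) hP
  have hne : c.support.Nonempty := Finsupp.support_nonempty_iff.mpr h0
  have hrange : P = ∑ i ∈ Finset.range (c.support.max' hne + 1), ι (c i) * δ ^ i := by
    rw [hc]
    refine Finsupp.sum_of_support_subset _ ?_ _ (by intro i _; rw [map_zero, zero_mul])
    intro i hi
    exact Finset.mem_range.mpr (Nat.lt_succ_of_le (Finset.le_max' _ i hi))
  rcases deg_of_range_sum hA (fun i => c i) (c.support.max' hne + 1) with h | ⟨k, -, hk⟩
  · exact absurd (hrange.trans h) hP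
  · exact ⟨k, hrange ▸ hk⟩

theorem comm_hasDeg [CharZero F] (hd : IsDerivation d) (hA : IsDiffOpRing d A ι δ)
    {P : A} {m : ℕ} (hP : HasDeg ι δ P (m+1)) {b : F} (hb : d b ≠ 0) :
    HasDeg ι δ (P * ι b - ι b * P) m := by
  obtain ⟨p, hpn, hPr⟩ := hP
  have step1 : P * ι b
      = ∑ i ∈ Finset.range (m+2), ∑ k ∈ Finset.range (i+1), ι (p i * ccAux d b i k) * δ ^ k := by
    rw [hPr, Finset.sum_mul]
    refine Finset.sum_congr rfl fun i _ => ?_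
    rw [mul_assoc, pow_mul_iota hd hA i b, Finset.mul_sum]
    refine Finset.sum_congr rfl fun k _ => ?_
    rw [← mul_assoc, ← map_mul]
  have step2 : ι b * P = ∑ i ∈ Finset.range (m+2), ι (p i * ccAux d b i i) * δ ^ i := by
    rw [hPr, Finset.mul_sum]
    refine Finset.sum_congr rfl fun i _ => ?_
    rw [← mul_assoc, ← map_mul, ccAux_diag hd, mul_comm b (p i)]
  have step3 : P * ι b - ι b * P
      = ∑ i ∈ Finset.range (m+2), ∑ k ∈ Finset.range i, ι (p i * ccAux d b i k) * δ ^ k := by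
    rw [step1, step2, ← Finset.sum_sub_distrib]
    refine Finset.sum_congr rfl fun i _ => ?_
    rw [Finset.sum_range_succ, add_sub_cancel_right]
  have step4 : ∀ i ∈ Finset.range (m+2),
      ∑ k ∈ Finset.range i, ι (p i * ccAux d b i k) * δ ^ k
        = ∑ k ∈ Finset.range (m+1), ι (p i * (if k < i then ccAux d b i k else 0)) * δ ^ k := by
    intro i hi
    have hin : i ≤ m + 1 := Nat.lt_succ_iff.mp (Finset.mem_range.mp hi)
    rw [← Finset.sum_subset (Finset.range_subset_range.mpr hin) ?_]
    · refine Finset.sum_congr rfl fun k hk => ?_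
      rw [if_pos (Finset.mem_range.mp hk)]
    · intro k _ hknot
      rw [if_neg (fun hlt => hknot (Finset.mem_range.mpr hlt)), mul_zero, map_zero, zero_mul]
  have key : P * ι b - ι b * P = ∑ k ∈ Finset.range (m+1),
      ι (∑ i ∈ Finset.range (m+2), p i * (if k < i then ccAux d b i k else 0)) * δ ^ k := by
    rw [step3, Finset.sum_congr rfl step4, Finset.sum_comm]
    refine Finset.sum_congr rfl fun k _ => ?_
    rw [map_sum, Finset.sum_mul]
  refine ⟨fun k => ∑ i ∈ Finset.range (m+2), p i * (if k < i then ccAux d b i k else 0), ?_, key⟩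
  have hlead : ∑ i ∈ Finset.range (m+2), p i * (if m < i then ccAux d b i m else 0)
      = p (m+1) * ccAux d b (m+1) m := by
    rw [Finset.sum_eq_single (m+1)]
    · rw [if_pos (by omega)]
    · intro i hi hine
      have : i ≤ m + 1 := Nat.lt_succ_iff.mp (Finset.mem_range.mp hi)
      rw [if_neg (by omega), mul_zero]
    · intro h
      exact absurd (Finset.self_mem_range_succ (m+1)) h
  show (∑ i ∈ Finset.range (m+2), p i * (if m < i then ccAux d b i m else 0)) ≠ 0
  rw [hlead, ccAux_subdiag hd]
  exact mul_ne_zero hpn (mul_ne_zero (Nat.cast_ne_zero.mpr (Nat.succ_ne_zero m)) hb)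

theorem hasDeg_mul_delta {P : A} {n : ℕ} (hP : HasDeg ι δ P n) :
    HasDeg ι δ (P * δ) (n+1) := by
  obtain ⟨p, hpn, hPr⟩ := hP
  refine ⟨fun i => match i with | 0 => 0 | (i+1) => p i, hpn, ?_⟩
  rw [Finset.sum_range_succ' (fun i =>
    ι ((fun i => match i with | 0 => 0 | (i+1) => p i) i) * δ ^ i) (n+1)]
  show P * δ = (∑ x ∈ Finset.range (n+1), ι (p x) * δ ^ (x+1)) + ι 0 * δ ^ 0
  rw [map_zero, zero_mul, add_zero, hPr, Finset.sum_mul]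
  refine Finset.sum_congr rfl fun i _ => ?_
  rw [mul_assoc, ← pow_succ]

theorem main_mem [CharZero F] {K : Type*} [DivisionRing K]
    (hd : IsDerivation d) (hA : IsDiffOpRing d A ι δ)
    {j : A →+* K} (hK : IsQuotientDivisionRing A K j)
    {R : Subring K}
    (hinner : ∀ x : K, x ≠ 0 → ∀ r ∈ R, x * r * x⁻¹ ∈ R)
    (hFR : Set.range (j.comp ι) ⊆ (R : Set K))
    {b : F} (hb : d b ≠ 0) :
    ∀ n P Q k, HasDeg ι δ P n → HasDeg ι δ Q k → k ≤ n → (j P)⁻¹ * j Q ∈ R := by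
  have hjι : ∀ x : F, j (ι x) ∈ R := fun x => hFR ⟨x, rfl⟩
  intro n
  induction n using Nat.strong_induction_on with
  | _ n IH =>
  intro P Q k hP hQ hkn
  have hPne : j P ≠ 0 := fun h => hasDeg_ne_zero hA hP (hK.inj (by rw [h, map_zero]))
  have claimlt : ∀ T : A, (T = 0 ∨ ∃ k', k' < n ∧ HasDeg ι δ T k') → (j P)⁻¹ * j T ∈ R := by
    rintro T (rfl | ⟨k', hk', hT⟩)
    · rw [map_zero, mul_zero]; exact R.zero_mem
    · obtain ⟨m, rfl⟩ : ∃ m, n = m + 1 := ⟨n - 1, by omega⟩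
      have hQ₁ : HasDeg ι δ (P * ι b - ι b * P) m := comm_hasDeg hd hA hP hb
      have hQ₁ne : j (P * ι b - ι b * P) ≠ 0 :=
        fun h => hasDeg_ne_zero hA hQ₁ (hK.inj (by rw [h, map_zero]))
      have hconj : (j P)⁻¹ * j (ι b) * j P ∈ R := by
        have h := hinner ((j P)⁻¹) (inv_ne_zero hPne) (j (ι b)) (hjι b)
        rwa [inv_inv] at h
      have h1 : (j P)⁻¹ * j (P * ι b - ι b * P) ∈ R := by
        have heq : (j P)⁻¹ * j (P * ι b - ι b * P) = j (ι b) - (j P)⁻¹ * j (ι b) * j P := by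
          rw [map_sub, map_mul, map_mul, mul_sub, ← mul_assoc, ← mul_assoc,
            inv_mul_cancel₀ hPne, one_mul]
        rw [heq]
        exact R.sub_mem (hjι b) hconj
      have h2 : (j (P * ι b - ι b * P))⁻¹ * j T ∈ R :=
        IH m (by omega) (P * ι b - ι b * P) T k' hQ₁ hT (by omega)
      have heq2 : (j P)⁻¹ * j T
          = ((j P)⁻¹ * j (P * ι b - ι b * P)) * ((j (P * ι b - ι b * P))⁻¹ * j T) := by
        rw [mul_assoc, ← mul_assoc (j (P * ι b - ι b * P)), mul_inv_cancel₀ hQ₁ne, one_mul]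
      rw [heq2]
      exact R.mul_mem h1 h2
  rcases eq_or_lt_of_le hkn with rfl | hlt
  · cases k with
    | zero =>
      obtain ⟨p, hp0, hPr⟩ := hP
      obtain ⟨q, hq0, hQr⟩ := hQ
      rw [Finset.sum_range_one, pow_zero, mul_one] at hPr hQr
      have hinv : (j P)⁻¹ = j (ι (p 0)⁻¹) := by
        refine inv_eq_of_mul_eq_one_left ?_
        rw [hPr, ← map_mul, ← map_mul, inv_mul_cancel₀ hp0, map_one, map_one]
      rw [hinv, hQr]
      exact R.mul_mem (hjι _) (hjι _)
    | succ m =>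
      obtain ⟨p, hp, hPr⟩ := hP
      obtain ⟨q, hq, hQr⟩ := hQ
      obtain ⟨c, hc⟩ : ∃ c : F, c = q (m+1) * (p (m+1))⁻¹ := ⟨_, rfl⟩
      have hdecomp : j Q = j (ι c) * j P + j (Q - ι c * P) := by
        rw [map_sub, map_mul, add_sub_cancel]
      have hmain : (j P)⁻¹ * j Q = (j P)⁻¹ * j (ι c) * j P
          + (j P)⁻¹ * j (Q - ι c * P) := by
        rw [hdecomp, mul_add, ← mul_assoc]
      have hconj : (j P)⁻¹ * j (ι c) * j P ∈ R := by
        have h := hinner ((j P)⁻¹) (inv_ne_zero hPne) (j (ι c)) (hjι _)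
        rwa [inv_inv] at h
      rw [hmain]
      refine R.add_mem hconj (claimlt _ ?_)
      have hTr : Q - ι c * P
          = ∑ i ∈ Finset.range (m+1), ι ((fun i => q i - c * p i) i) * δ ^ i := by
        have h2 : Q - ι c * P
            = ∑ i ∈ Finset.range (m+1+1), ι (q i - c * p i) * δ ^ i := by
          rw [hQr, hPr, Finset.mul_sum, ← Finset.sum_sub_distrib]
          refine Finset.sum_congr rfl fun i _ => ?_
          rw [map_sub, sub_mul, ← mul_assoc, ← map_mul]
        have h3 : q (m+1) - c * p (m+1) = 0 := by
          rw [hc, mul_assoc, inv_mul_cancel₀ hp, mul_one, sub_self]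
        rw [h2, Finset.sum_range_succ, h3, map_zero, zero_mul, add_zero]
      rw [hTr]
      exact deg_of_range_sum hA (fun i => q i - c * p i) (m+1)
  · exact claimlt Q (Or.inr ⟨k, hlt, hQ⟩)

end Statement13Aux

/-- The only valuation subring of `F(∂)` containing `F` and different from
`F(∂)` itself is `F(∂)_{≤0}`, the set of rational pseudo-differential operators of nonpositive
order: if `R` is a subring of `F(∂)` invariant under inner automorphisms such that for every
nonzero `x`, `x ∈ R` or `x⁻¹ ∈ R`, and if `F ⊆ R` and `R ≠ F(∂)`, then
`R = {P⁻¹Q : deg Q ≤ deg P}`. -/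
theorem valuation_subring_eq_nonpositive_order {F : Type*} [Field F] [CharZero F]
    (d : F → F) (hd : IsDerivation d)
    (halg : IsAlgClosed (constants F d hd))
    (hne : constants F d hd ≠ ⊤)
    {A : Type*} [Ring A] (ι : F →+* A) (δ : A) (hA : IsDiffOpRing d A ι δ)
    {K : Type*} [DivisionRing K] (j : A →+* K) (hK : IsQuotientDivisionRing A K j)
    (R : Subring K)
    (hinner : ∀ x : K, x ≠ 0 → ∀ r ∈ R, x * r * x⁻¹ ∈ R)
    (hval : ∀ x : K, x ≠ 0 → x ∈ R ∨ x⁻¹ ∈ R)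
    (hFR : Set.range (j.comp ι) ⊆ (R : Set K))
    (hRtop : R ≠ ⊤) :
    (R : Set K) = {f : K | ∃ P Q : A, P ≠ 0 ∧ f = (j P)⁻¹ * j Q ∧
      ∀ m k : ℕ, HasDeg ι δ P m → HasDeg ι δ Q k → k ≤ m} := by
  classical
  obtain ⟨b, hb⟩ : ∃ b : F, d b ≠ 0 := by
    by_contra h
    push_neg at h
    exact hne (Subfield.ext fun x => ⟨fun _ => Subfield.mem_top x, fun _ => h x⟩)
  have hjι : ∀ x : F, j (ι x) ∈ R := fun x => hFR ⟨x, rfl⟩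
  have main := main_mem hd hA hK hinner hFR hb
  have hPinv : ∀ P : A, P ≠ 0 → (j P)⁻¹ ∈ R := by
    intro P hP0
    obtain ⟨m, hm⟩ := exists_hasDeg hA hP0
    have h1 : HasDeg ι δ (ι (1:F)) 0 :=
      ⟨fun _ => 1, one_ne_zero, by rw [Finset.sum_range_one, pow_zero, mul_one]⟩
    have h2 := main m P (ι 1) 0 hm h1 (Nat.zero_le m)
    rwa [map_one, map_one, mul_one] at h2
  have hδnotR : j δ ∉ R := by
    intro hδ
    apply hRtop
    rw [Subring.eq_top_iff']
    intro g
    rcases eq_or_ne g 0 with rfl | hg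
    · exact R.zero_mem
    obtain ⟨P, Q, hP0, hgPQ⟩ := hK.quot g
    have hjQ : j Q ∈ R := by
      obtain ⟨cQ, hcQ, -⟩ := hA.repr Q
      rw [hcQ, Finsupp.sum, map_sum]
      refine R.sum_mem fun i _ => ?_
      rw [map_mul, map_pow]
      exact R.mul_mem (hjι _) (R.pow_mem hδ i)
    rw [hgPQ]
    exact R.mul_mem (hPinv P hP0) hjQ
  ext f
  simp only [SetLike.mem_coe, Set.mem_setOf_eq]
  constructor
  · intro hf
    rcases eq_or_ne f 0 with rfl | hf0
    · refine ⟨1, 0, ?_, by rw [map_zero, mul_zero], ?_⟩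
      · intro h1
        exact one_ne_zero (α := K) (by rw [← map_one j, h1, map_zero])
      · intro m k _ hk
        exact absurd rfl (hasDeg_ne_zero hA hk)
    · obtain ⟨P, Q, hP0, hfPQ⟩ := hK.quot f
      have hQ0 : Q ≠ 0 := by
        rintro rfl
        rw [map_zero, mul_zero] at hfPQ
        exact hf0 hfPQ
      obtain ⟨m, hm⟩ := exists_hasDeg hA hP0
      obtain ⟨k, hk⟩ := exists_hasDeg hA hQ0
      refine ⟨P, Q, hP0, hfPQ, fun m' k' hm' hk' => ?_⟩
      rw [hasDeg_unique hA hm' hm, hasDeg_unique hA hk' hk]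
      by_contra hmk
      push_neg at hmk
      apply hδnotR
      have h1 : (j Q)⁻¹ * j (P * δ) ∈ R :=
        main k Q (P * δ) (m+1) hk (hasDeg_mul_delta hm) (by omega)
      have hPne : j P ≠ 0 := fun h => hP0 (hK.inj (by rw [h, map_zero]))
      have hQne : j Q ≠ 0 := fun h => hQ0 (hK.inj (by rw [h, map_zero]))
      have heq : f * ((j Q)⁻¹ * j (P * δ)) = j δ := by
        rw [hfPQ, map_mul, mul_assoc ((j P)⁻¹) (j Q), ← mul_assoc (j Q),
          mul_inv_cancel₀ hQne, one_mul, ← mul_assoc, inv_mul_cancel₀ hPne, one_mul]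
      rw [← heq]
      exact R.mul_mem hf h1
  · rintro ⟨P, Q, hP0, hfPQ, hcond⟩
    rcases eq_or_ne Q 0 with rfl | hQ0
    · rw [hfPQ, map_zero, mul_zero]
      exact R.zero_mem
    obtain ⟨m, hm⟩ := exists_hasDeg hA hP0
    obtain ⟨k, hk⟩ := exists_hasDeg hA hQ0
    rw [hfPQ]
    exact main m P Q k hm hk (hcond m k hm hk)
end

section
/- (a) σ_α is a Lie algebra 2-cocycle on F(∂) regarded as a Lie algebra over C; (b) the cohomology class [σ_α] ∈ H²_Lie(F(∂)) does not depend on the choice of the lift α. -/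
open Finset

/-- The two-sided ideal `I(V)` of finite-rank endomorphisms of a `C`-vector space `V`. -/
def finRankIdeal (C : Type*) [Field C] (V : Type*) [AddCommGroup V] [Module C V] :
    TwoSidedIdeal (Module.End C V) :=
  TwoSidedIdeal.mk' {L : Module.End C V | FiniteDimensional C (LinearMap.range L)}
    (by
      show FiniteDimensional C (LinearMap.range (0 : Module.End C V))
      rw [LinearMap.range_zero]
      infer_instance)
    (by
      intro f g hf hg
      simp only [Set.mem_setOf_eq] at *
      have hle : LinearMap.range (f + g) ≤ LinearMap.range f ⊔ LinearMap.range g := by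
        rintro y ⟨x, rfl⟩
        exact Submodule.mem_sup.2 ⟨f x, ⟨x, rfl⟩, g x, ⟨x, rfl⟩, rfl⟩
      haveI := hf; haveI := hg
      haveI := Submodule.finiteDimensional_sup (LinearMap.range f) (LinearMap.range g)
      exact Submodule.finiteDimensional_of_le hle)
    (by
      intro f hf
      simp only [Set.mem_setOf_eq] at *
      rw [LinearMap.range_neg]
      exact hf)
    (by
      intro f g hg
      simp only [Set.mem_setOf_eq] at *
      haveI := hg
      have : LinearMap.range (f * g) = Submodule.map f (LinearMap.range g) :=
        LinearMap.range_comp g f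
      rw [this]
      exact Module.Finite.map _ f)
    (by
      intro f g hf
      simp only [Set.mem_setOf_eq] at *
      haveI := hf
      have hle : LinearMap.range (f * g) ≤ LinearMap.range f := by
        rintro y ⟨x, rfl⟩; exact ⟨g x, rfl⟩
      exact Submodule.finiteDimensional_of_le hle)

/-- The Calkin algebra `M_C(V) = End_C(V) / I(V)`. -/
abbrev CalkinAlgebra (C : Type*) [Field C] (V : Type*) [AddCommGroup V] [Module C V] :=
  (finRankIdeal C V).ringCon.Quotient


/-- The trace of a finite-rank endomorphism `L`, computed as the trace of the restriction of
`L` to its (finite-dimensional) range. -/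
noncomputable def ftrace (C : Type*) [Field C] (V : Type*) [AddCommGroup V] [Module C V]
    (L : Module.End C V) : C :=
  LinearMap.trace C (LinearMap.range L)
    (L.restrict (p := LinearMap.range L) (q := LinearMap.range L)
      (fun x _ => LinearMap.mem_range_self L x))

/-- The Calkin 2-cocycle `σ_α(P,Q) = tr(α([P,Q]) - [α(P), α(Q)])` attached to a lift `α` of the
embedding of `F(∂)` into the Calkin algebra. -/
noncomputable def calkinCocycle {C : Type*} [Field C] {V : Type*} [AddCommGroup V]
    [Module C V] {K : Type*} [DivisionRing K] (α : K → Module.End C V) (P Q : K) : C :=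
  ftrace C V (α (P * Q - Q * P) - (α P * α Q - α Q * α P))

section TraceLemmas

variable {C : Type*} [Field C] {V : Type*} [AddCommGroup V] [Module C V]

lemma ftrace_factor' (W : Submodule C V) [FiniteDimensional C W] (f : V →ₗ[C] W) :
    ftrace C V (W.subtype ∘ₗ f) = LinearMap.trace C W (f ∘ₗ W.subtype) := by
  set L : Module.End C V := W.subtype ∘ₗ f with hLdef
  have hRW : LinearMap.range L ≤ W := by rintro _ ⟨x, rfl⟩; exact (f x).2
  set R := LinearMap.range L with hR
  haveI : FiniteDimensional C R := Submodule.finiteDimensional_of_le hRW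
  let e : R →ₗ[C] W := Submodule.inclusion hRW
  let p : W →ₗ[C] R := LinearMap.codRestrict R (L ∘ₗ W.subtype)
    (fun w => LinearMap.mem_range_self _ _)
  have h1 : ftrace C V L = LinearMap.trace C R (p ∘ₗ e) := by
    unfold ftrace
    congr 1
  have h2 : f ∘ₗ W.subtype = e ∘ₗ p := by
    ext w
    exact congrArg Subtype.val (rfl : (f (W.subtype w)) = f (W.subtype w))
  rw [h1, h2, LinearMap.trace_comp_comm']

lemma ftrace_factor (W : Submodule C V) [FiniteDimensional C W] (L : Module.End C V)
    (h : ∀ x : V, L x ∈ W) :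
    ftrace C V L = LinearMap.trace C W ((LinearMap.codRestrict W L h) ∘ₗ W.subtype) := by
  have hL : W.subtype ∘ₗ LinearMap.codRestrict W L h = L := by ext x; rfl
  have := ftrace_factor' W (LinearMap.codRestrict W L h)
  rwa [hL] at this

lemma ftrace_zero : ftrace C V 0 = 0 := by
  haveI : FiniteDimensional C (⊥ : Submodule C V) := inferInstance
  rw [ftrace_factor (⊥ : Submodule C V) 0 (fun x => by simp)]
  have : (LinearMap.codRestrict (⊥ : Submodule C V) (0 : Module.End C V) (fun x => by simp))
      ∘ₗ (⊥ : Submodule C V).subtype = 0 := by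
    ext x
  rw [this, map_zero]

lemma ftrace_add (L M : Module.End C V) (hL : FiniteDimensional C (LinearMap.range L))
    (hM : FiniteDimensional C (LinearMap.range M)) :
    ftrace C V (L + M) = ftrace C V L + ftrace C V M := by
  set W := LinearMap.range L ⊔ LinearMap.range M with hW
  haveI : FiniteDimensional C W := Submodule.finiteDimensional_sup _ _
  have hL' : ∀ x, L x ∈ W := fun x => le_sup_left (α := Submodule C V) (LinearMap.mem_range_self L x)
  have hM' : ∀ x, M x ∈ W := fun x => le_sup_right (α := Submodule C V) (LinearMap.mem_range_self M x)
  have hLM : ∀ x, (L + M) x ∈ W := fun x => by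
    simpa using W.add_mem (hL' x) (hM' x)
  rw [ftrace_factor W L hL', ftrace_factor W M hM', ftrace_factor W (L + M) hLM, ← map_add]
  congr 1

lemma ftrace_smul (c : C) (L : Module.End C V) (hL : FiniteDimensional C (LinearMap.range L)) :
    ftrace C V (c • L) = c * ftrace C V L := by
  set W := LinearMap.range L with hW
  have hL' : ∀ x, L x ∈ W := fun x => LinearMap.mem_range_self L x
  have hcL : ∀ x, (c • L) x ∈ W := fun x => by
    simpa using W.smul_mem c (hL' x)
  rw [ftrace_factor W L hL', ftrace_factor W (c • L) hcL]
  have : (LinearMap.codRestrict W (c • L) hcL) ∘ₗ W.subtype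
      = c • ((LinearMap.codRestrict W L hL') ∘ₗ W.subtype) := by
    ext x; rfl
  rw [this, map_smul, smul_eq_mul]

lemma ftrace_neg (L : Module.End C V) (hL : FiniteDimensional C (LinearMap.range L)) :
    ftrace C V (-L) = - ftrace C V L := by
  have h := ftrace_smul (-1 : C) L hL
  simpa using h

lemma ftrace_sub (L M : Module.End C V) (hL : FiniteDimensional C (LinearMap.range L))
    (hM : FiniteDimensional C (LinearMap.range M)) :
    ftrace C V (L - M) = ftrace C V L - ftrace C V M := by
  have hM' : FiniteDimensional C (LinearMap.range (-M)) := by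
    rwa [LinearMap.range_neg]
  rw [sub_eq_add_neg, ftrace_add L (-M) hL hM', ftrace_neg M hM, sub_eq_add_neg]

lemma ftrace_mul_comm (L M : Module.End C V) (hL : FiniteDimensional C (LinearMap.range L)) :
    ftrace C V (L * M) = ftrace C V (M * L) := by
  set W := LinearMap.range L with hW
  let Lc : V →ₗ[C] W := L.rangeRestrict
  let g : W →ₗ[C] V := M ∘ₗ W.subtype
  set W' := LinearMap.range g with hW'
  haveI : FiniteDimensional C W' := by
    exact Module.Finite.range g
  have h1 : L * M = W.subtype ∘ₗ (Lc ∘ₗ M) := by ext x; rfl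
  have h2 : M * L = W'.subtype ∘ₗ (g.rangeRestrict ∘ₗ Lc) := by ext x; rfl
  rw [h1, ftrace_factor' W _, h2, ftrace_factor' W' _]
  have h3 : (Lc ∘ₗ M) ∘ₗ W.subtype = (Lc ∘ₗ W'.subtype) ∘ₗ g.rangeRestrict := by
    ext w; rfl
  have h4 : (g.rangeRestrict ∘ₗ Lc) ∘ₗ W'.subtype = g.rangeRestrict ∘ₗ (Lc ∘ₗ W'.subtype) := by
    rw [LinearMap.comp_assoc]
  rw [h3, h4, LinearMap.trace_comp_comm']

lemma mem_finRankIdeal_iff (L : Module.End C V) :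
    L ∈ finRankIdeal C V ↔ FiniteDimensional C (LinearMap.range L) :=
  TwoSidedIdeal.mem_mk' _ _ _ _ _ _ _

lemma ftrace_commutator (L M : Module.End C V) (hL : FiniteDimensional C (LinearMap.range L)) :
    ftrace C V (L * M - M * L) = 0 := by
  have h1 : FiniteDimensional C (LinearMap.range (L * M)) := by
    rw [← mem_finRankIdeal_iff]
    exact (finRankIdeal C V).mul_mem_right _ _ ((mem_finRankIdeal_iff L).2 hL)
  have h2 : FiniteDimensional C (LinearMap.range (M * L)) := by
    rw [← mem_finRankIdeal_iff]
    exact (finRankIdeal C V).mul_mem_left _ _ ((mem_finRankIdeal_iff L).2 hL)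
  rw [ftrace_sub _ _ h1 h2, ftrace_mul_comm L M hL, sub_self]

end TraceLemmas

set_option maxHeartbeats 1000000 in
set_option synthInstance.maxHeartbeats 1000000 in
/-- (a) `σ_α` is a Lie algebra 2-cocycle on `F(∂)`, regarded as a Lie algebra
over `C`; (b) its cohomology class in `H²_Lie(F(∂))` does not depend on the choice of linear
lift `α` of `θ : F(∂) → M_C(F)`: the difference of the cocycles attached to two lifts is the
coboundary of a `C`-linear functional `μ`. -/
theorem calkinCocycle_isCocycle_and_class_independent_of_lift {F : Type*} [Field F]
    [CharZero F] (d : F → F) (hd : IsDerivation d)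
    (halg : IsAlgClosed (constants F d hd))
    (hne : constants F d hd ≠ ⊤)
    (hldc : LinDiffClosed d)
    {A : Type*} [Ring A] (ι : F →+* A) (δ : A) (hA : IsDiffOpRing d A ι δ)
    {K : Type*} [DivisionRing K] (j : A →+* K) (hK : IsQuotientDivisionRing A K j)
    (ρ : A →+* Module.End (constants F d hd) F)
    (hρ1 : ∀ a y : F, ρ (ι a) y = a * y)
    (hρ2 : ∀ y : F, ρ δ y = d y)
    (Θ : K →+* CalkinAlgebra (constants F d hd) F)
    (hΘinj : Function.Injective Θ)
    (hΘ : ∀ P : A, Θ (j P) = (finRankIdeal (constants F d hd) F).ringCon.mk' (ρ P))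
    (α α' : K → Module.End (constants F d hd) F)
    (hαadd : ∀ x y : K, α (x + y) = α x + α y)
    (hαsmul : ∀ (c : constants F d hd) (x : K), α (j (ι (c : F)) * x) = c • α x)
    (hαlift : ∀ x : K, (finRankIdeal (constants F d hd) F).ringCon.mk' (α x) = Θ x)
    (hα'add : ∀ x y : K, α' (x + y) = α' x + α' y)
    (hα'smul : ∀ (c : constants F d hd) (x : K), α' (j (ι (c : F)) * x) = c • α' x)
    (hα'lift : ∀ x : K, (finRankIdeal (constants F d hd) F).ringCon.mk' (α' x) = Θ x) :
    -- (a) `σ_α` is a Lie algebra 2-cocycle over `C`: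
    ((∀ x y z : K, calkinCocycle α (x + y) z = calkinCocycle α x z + calkinCocycle α y z) ∧
     (∀ (c : constants F d hd) (x y : K),
        calkinCocycle α (j (ι (c : F)) * x) y = c * calkinCocycle α x y) ∧
     (∀ x : K, calkinCocycle α x x = 0) ∧
     (∀ x y : K, calkinCocycle α x y = - calkinCocycle α y x) ∧
     (∀ x y z : K,
        calkinCocycle α (x * y - y * x) z + calkinCocycle α (y * z - z * y) x
          + calkinCocycle α (z * x - x * z) y = 0)) ∧
    -- (b) the class of `σ_α` does not depend on `α`: the difference of the cocycles of two
    -- lifts is a coboundary.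
    (∃ μ : K → constants F d hd,
      (∀ x y : K, μ (x + y) = μ x + μ y) ∧
      (∀ (c : constants F d hd) (x : K), μ (j (ι (c : F)) * x) = c * μ x) ∧
      (∀ x y : K,
        calkinCocycle α x y - calkinCocycle α' x y = μ (x * y - y * x))) := by
  classical
  -- membership from equality of classes in the Calkin algebra
  have hmem : ∀ L M : Module.End (constants F d hd) F, (finRankIdeal (constants F d hd) F).ringCon.mk' L = (finRankIdeal (constants F d hd) F).ringCon.mk' M → L - M ∈ finRankIdeal (constants F d hd) F := by
    intro L M h
    exact (TwoSidedIdeal.rel_iff _ L M).1 (Quotient.eq''.mp h)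
  have fd : ∀ L : Module.End (constants F d hd) F, L ∈ finRankIdeal (constants F d hd) F → FiniteDimensional (constants F d hd) (LinearMap.range L) :=
    fun L h => (mem_finRankIdeal_iff L).1 h
  -- basic facts for any additive lift β of Θ
  have hbas : ∀ β : K → Module.End (constants F d hd) F, (∀ x y : K, β (x + y) = β x + β y) →
      (∀ x : K, (finRankIdeal (constants F d hd) F).ringCon.mk' (β x) = Θ x) →
      (β 0 = 0) ∧ (∀ x : K, β (-x) = - β x) ∧ (∀ x y : K, β (x - y) = β x - β y) ∧
      (∀ x y : K, β (x * y - y * x) - (β x * β y - β y * β x) ∈ finRankIdeal (constants F d hd) F) := by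
    intro β hadd hlift
    have h0 : β 0 = 0 := by
      have h := hadd 0 0
      rw [add_zero] at h
      have h2 : β 0 + 0 = β 0 + β 0 := by rw [add_zero]; exact h
      exact (add_left_cancel h2).symm
    have hneg : ∀ x : K, β (-x) = - β x := by
      intro x
      have h := hadd x (-x)
      rw [add_neg_cancel, h0] at h
      exact (neg_eq_of_add_eq_zero_right h.symm).symm
    have hsub : ∀ x y : K, β (x - y) = β x - β y := by
      intro x y
      rw [sub_eq_add_neg, hadd, hneg, sub_eq_add_neg]
    have hcross : ∀ x y : K, β (x * y) - β x * β y ∈ finRankIdeal (constants F d hd) F := by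
      intro x y
      apply hmem
      rw [hlift, map_mul, ← hlift x, ← hlift y, ← map_mul]
    refine ⟨h0, hneg, hsub, fun x y => ?_⟩
    have h : β (x * y - y * x) - (β x * β y - β y * β x)
        = (β (x * y) - β x * β y) - (β (y * x) - β y * β x) := by
      rw [hsub]; abel
    rw [h]
    exact (finRankIdeal (constants F d hd) F).sub_mem (hcross x y) (hcross y x)
  obtain ⟨hα0, hαneg, hαsub, hbr⟩ := hbas α hαadd hαlift
  obtain ⟨hα'0, hα'neg, hα'sub, hbr'⟩ := hbas α' hα'add hα'lift
  -- centrality of constants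
  have hcentralA : ∀ (c : (constants F d hd)) (P : A), ι (c : F) * P = P * ι (c : F) := by
    intro c P
    have hc : d (c : F) = 0 := c.2
    have hδ : δ * ι (c : F) = ι (c : F) * δ := by
      rw [hA.comm, hc, map_zero, add_zero]
    have hδpow : ∀ i : ℕ, δ ^ i * ι (c : F) = ι (c : F) * δ ^ i := by
      intro i
      induction i with
      | zero => simp
      | succ n ih => rw [pow_succ, mul_assoc, hδ, ← mul_assoc, ih, mul_assoc]
    obtain ⟨co, hco, -⟩ := hA.repr P
    rw [hco, Finsupp.mul_sum, Finsupp.sum_mul]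
    refine Finsupp.sum_congr ?_
    intro i _
    have hcomm : ι (c : F) * ι (co i) = ι (co i) * ι (c : F) := by
      rw [← map_mul, ← map_mul, mul_comm]
    rw [← mul_assoc, hcomm, mul_assoc, ← hδpow i, ← mul_assoc]
  have hcentralK : ∀ (c : (constants F d hd)) (f : K), j (ι (c : F)) * f = f * j (ι (c : F)) := by
    intro c f
    obtain ⟨P, Q, hP, rfl⟩ := hK.quot f
    have h1 : Commute (j (ι (c : F))) (j P) := by
      have h := congrArg j (hcentralA c P)
      rw [map_mul, map_mul] at h
      exact h
    have h2 : Commute (j (ι (c : F))) (j Q) := by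
      have h := congrArg j (hcentralA c Q)
      rw [map_mul, map_mul] at h
      exact h
    exact ((h1.inv_right₀).mul_right h2).eq
  have hsmulbr : ∀ (c : (constants F d hd)) (x y : K),
      (j (ι (c : F)) * x) * y - y * (j (ι (c : F)) * x)
        = j (ι (c : F)) * (x * y - y * x) := by
    intro c x y
    have h2 : y * (j (ι (c : F)) * x) = j (ι (c : F)) * (y * x) := by
      rw [← mul_assoc, ← hcentralK c y, mul_assoc]
    rw [h2, mul_assoc, ← mul_sub]
  -- part (a)
  have ha1 : ∀ x y z : K,
      calkinCocycle α (x + y) z = calkinCocycle α x z + calkinCocycle α y z := by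
    intro x y z
    simp only [calkinCocycle]
    have harg : (x + y) * z - z * (x + y) = (x * z - z * x) + (y * z - z * y) := by
      noncomm_ring
    have hop : α ((x + y) * z - z * (x + y)) - (α (x + y) * α z - α z * α (x + y))
        = (α (x * z - z * x) - (α x * α z - α z * α x))
          + (α (y * z - z * y) - (α y * α z - α z * α y)) := by
      rw [harg, hαadd, hαadd x y]
      noncomm_ring
    rw [hop]
    exact ftrace_add _ _ (fd _ (hbr x z)) (fd _ (hbr y z))
  have ha2 : ∀ (c : (constants F d hd)) (x y : K),
      calkinCocycle α (j (ι (c : F)) * x) y = c * calkinCocycle α x y := by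
    intro c x y
    simp only [calkinCocycle]
    have hop : α ((j (ι (c : F)) * x) * y - y * (j (ι (c : F)) * x))
        - (α (j (ι (c : F)) * x) * α y - α y * α (j (ι (c : F)) * x))
        = c • (α (x * y - y * x) - (α x * α y - α y * α x)) := by
      rw [hsmulbr c x y, hαsmul, hαsmul, smul_sub, smul_sub, smul_mul_assoc, mul_smul_comm]
    rw [hop]
    exact ftrace_smul c _ (fd _ (hbr x y))
  have ha3 : ∀ x : K, calkinCocycle α x x = 0 := by
    intro x
    simp only [calkinCocycle]
    rw [sub_self, hα0, sub_self, sub_self]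
    exact ftrace_zero
  have ha4 : ∀ x y : K, calkinCocycle α x y = - calkinCocycle α y x := by
    intro x y
    simp only [calkinCocycle]
    have hop : α (y * x - x * y) - (α y * α x - α x * α y)
        = - (α (x * y - y * x) - (α x * α y - α y * α x)) := by
      have h : (y * x - x * y : K) = -(x * y - y * x) := by noncomm_ring
      rw [h, hαneg]
      noncomm_ring
    rw [hop, ftrace_neg _ (fd _ (hbr x y)), neg_neg]
  have ha5 : ∀ x y z : K,
      calkinCocycle α (x * y - y * x) z + calkinCocycle α (y * z - z * y) x
        + calkinCocycle α (z * x - x * z) y = 0 := by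
    intro x y z
    simp only [calkinCocycle]
    have hsum : α ((x * y - y * x) * z - z * (x * y - y * x))
        + α ((y * z - z * y) * x - x * (y * z - z * y))
        + α ((z * x - x * z) * y - y * (z * x - x * z)) = 0 := by
      rw [← hαadd, ← hαadd]
      have h : ((x * y - y * x) * z - z * (x * y - y * x))
          + ((y * z - z * y) * x - x * (y * z - z * y))
          + ((z * x - x * z) * y - y * (z * x - x * z)) = (0 : K) := by noncomm_ring
      rw [h, hα0]
    set R1 := α (x * y - y * x) - (α x * α y - α y * α x) with hR1
    set R2 := α (y * z - z * y) - (α y * α z - α z * α y) with hR2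
    set R3 := α (z * x - x * z) - (α z * α x - α x * α z) with hR3
    have hD1 : α (x * y - y * x) = (α x * α y - α y * α x) + R1 := by rw [hR1]; abel
    have hD2 : α (y * z - z * y) = (α y * α z - α z * α y) + R2 := by rw [hR2]; abel
    have hD3 : α (z * x - x * z) = (α z * α x - α x * α z) + R3 := by rw [hR3]; abel
    have hkey : (α ((x * y - y * x) * z - z * (x * y - y * x))
          - (α (x * y - y * x) * α z - α z * α (x * y - y * x)))
        + (α ((y * z - z * y) * x - x * (y * z - z * y))
          - (α (y * z - z * y) * α x - α x * α (y * z - z * y)))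
        + (α ((z * x - x * z) * y - y * (z * x - x * z))
          - (α (z * x - x * z) * α y - α y * α (z * x - x * z)))
        = -((R1 * α z - α z * R1) + (R2 * α x - α x * R2) + (R3 * α y - α y * R3)) := by
      refine eq_neg_of_add_eq_zero_right ?_
      calc _ = (α ((x * y - y * x) * z - z * (x * y - y * x))
            + α ((y * z - z * y) * x - x * (y * z - z * y))
            + α ((z * x - x * z) * y - y * (z * x - x * z))) := by
              rw [hD1, hD2, hD3]; simp only [sub_mul, mul_sub, add_mul, mul_add, mul_assoc]; abel
        _ = 0 := hsum
    have hm1 := hbr (x * y - y * x) z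
    have hm2 := hbr (y * z - z * y) x
    have hm3 := hbr (z * x - x * z) y
    rw [← ftrace_add _ _ (fd _ hm1) (fd _ hm2),
      ← ftrace_add _ _ (fd _ ((finRankIdeal (constants F d hd) F).add_mem hm1 hm2)) (fd _ hm3), hkey]
    have hS1 : R1 * α z - α z * R1 ∈ finRankIdeal (constants F d hd) F :=
      (finRankIdeal (constants F d hd) F).sub_mem ((finRankIdeal (constants F d hd) F).mul_mem_right _ _ (hbr x y)) ((finRankIdeal (constants F d hd) F).mul_mem_left _ _ (hbr x y))
    have hS2 : R2 * α x - α x * R2 ∈ finRankIdeal (constants F d hd) F :=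
      (finRankIdeal (constants F d hd) F).sub_mem ((finRankIdeal (constants F d hd) F).mul_mem_right _ _ (hbr y z)) ((finRankIdeal (constants F d hd) F).mul_mem_left _ _ (hbr y z))
    have hS3 : R3 * α y - α y * R3 ∈ finRankIdeal (constants F d hd) F :=
      (finRankIdeal (constants F d hd) F).sub_mem ((finRankIdeal (constants F d hd) F).mul_mem_right _ _ (hbr z x)) ((finRankIdeal (constants F d hd) F).mul_mem_left _ _ (hbr z x))
    rw [ftrace_neg _ (fd _ ((finRankIdeal (constants F d hd) F).add_mem ((finRankIdeal (constants F d hd) F).add_mem hS1 hS2) hS3)),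
      ftrace_add _ _ (fd _ ((finRankIdeal (constants F d hd) F).add_mem hS1 hS2)) (fd _ hS3),
      ftrace_add _ _ (fd _ hS1) (fd _ hS2),
      ftrace_commutator _ _ (fd _ (hbr x y)),
      ftrace_commutator _ _ (fd _ (hbr y z)),
      ftrace_commutator _ _ (fd _ (hbr z x))]
    simp
  -- part (b)
  have hdiff : ∀ x : K, α x - α' x ∈ finRankIdeal (constants F d hd) F := fun x => hmem _ _ (by rw [hαlift, hα'lift])
  refine ⟨⟨ha1, ha2, ha3, ha4, ha5⟩,
    ⟨fun x => ftrace (constants F d hd) F (α x - α' x), ?_, ?_, ?_⟩⟩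
  · intro x y
    dsimp only
    have h : α (x + y) - α' (x + y) = (α x - α' x) + (α y - α' y) := by
      rw [hαadd, hα'add]; abel
    rw [h]
    exact ftrace_add _ _ (fd _ (hdiff x)) (fd _ (hdiff y))
  · intro c x
    dsimp only
    have h : α (j (ι (c : F)) * x) - α' (j (ι (c : F)) * x) = c • (α x - α' x) := by
      rw [hαsmul, hα'smul, smul_sub]
    rw [h]
    exact ftrace_smul c _ (fd _ (hdiff x))
  · intro x y
    dsimp only
    simp only [calkinCocycle]
    set w := x * y - y * x with hw
    set B := (α x * α y - α y * α x) - (α' x * α' y - α' y * α' x) with hB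
    have hBmem : B ∈ finRankIdeal (constants F d hd) F := by
      have hB2 : B = ((α x - α' x) * α y - α y * (α x - α' x))
          - ((α y - α' y) * α' x - α' x * (α y - α' y)) := by
        rw [hB]; simp only [sub_mul, mul_sub]; abel
      rw [hB2]
      exact (finRankIdeal (constants F d hd) F).sub_mem
        ((finRankIdeal (constants F d hd) F).sub_mem ((finRankIdeal (constants F d hd) F).mul_mem_right _ _ (hdiff x)) ((finRankIdeal (constants F d hd) F).mul_mem_left _ _ (hdiff x)))
        ((finRankIdeal (constants F d hd) F).sub_mem ((finRankIdeal (constants F d hd) F).mul_mem_right _ _ (hdiff y)) ((finRankIdeal (constants F d hd) F).mul_mem_left _ _ (hdiff y)))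
    have hBtr : ftrace (constants F d hd) F B = 0 := by
      have hB2 : B = ((α x - α' x) * α y - α y * (α x - α' x))
          - ((α y - α' y) * α' x - α' x * (α y - α' y)) := by
        rw [hB]; simp only [sub_mul, mul_sub]; abel
      have hS1 : (α x - α' x) * α y - α y * (α x - α' x) ∈ finRankIdeal (constants F d hd) F :=
        (finRankIdeal (constants F d hd) F).sub_mem ((finRankIdeal (constants F d hd) F).mul_mem_right _ _ (hdiff x)) ((finRankIdeal (constants F d hd) F).mul_mem_left _ _ (hdiff x))
      have hS2 : (α y - α' y) * α' x - α' x * (α y - α' y) ∈ finRankIdeal (constants F d hd) F :=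
        (finRankIdeal (constants F d hd) F).sub_mem ((finRankIdeal (constants F d hd) F).mul_mem_right _ _ (hdiff y)) ((finRankIdeal (constants F d hd) F).mul_mem_left _ _ (hdiff y))
      rw [hB2, ftrace_sub _ _ (fd _ hS1) (fd _ hS2),
        ftrace_commutator _ _ (fd _ (hdiff x)), ftrace_commutator _ _ (fd _ (hdiff y)),
        sub_self]
    have hEdiff : (α w - (α x * α y - α y * α x)) - (α' w - (α' x * α' y - α' y * α' x))
        = (α w - α' w) - B := by
      rw [hB]; abel
    rw [← ftrace_sub _ _ (fd _ (hbr x y)) (fd _ (hbr' x y)), hEdiff,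
      ftrace_sub _ _ (fd _ (hdiff w)) (fd _ hBmem), hBtr, sub_zero]
end
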